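/- arXiv:2306.17753 — 4 statements merged into one kernel-verified Lean document; each statement's English description precedes it below -/
import Mathlib

section
/- Let H be a unital Hopf *-algebra with bijective antipode S, let N be a unital *-algebra which is a right H-module algebra via ◁ and carries a left coaction θ: N → H^op ⊗ N (written θ(m) = m₍₋₁₎ ⊗ m₍₀₎) making (N, ◁, θ) a braided commutative Yetter–Drinfeld algebra, i.e. θ(m ◁ h) = S⁻¹(h₍₃₎) m₍₋₁₎ h₍₁₎ ⊗ (m₍₀₎ ◁ h₍₂₎) and mn = (n ◁ m₍₋₁₎) m₍₀₎ for all m,n ∈ N, h ∈ H. Define γ(m) := m₍₀₎ ◁ S⁻¹(m₍₋₁₎) and γ̂(m) := m₍₀₎ ◁ S²(m₍₋₁₎). Then γ(γ̂(m)) = m and γ̂(γ(m)) = m for all m ∈ N; in particular γ and γ̂ are mutually inverse bijections of N. -/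
open scoped TensorProduct

noncomputable section

/-- A unital Hopf algebra over `ℂ`, presented together with chosen finite
Sweedler representatives for the comultiplication and a bijective antipode. -/
structure HopfData (H : Type*) [Ring H] [Algebra ℂ H] where
  comul : H →ₗ[ℂ] H ⊗[ℂ] H
  Δ : H → List (H × H)
  Δ_spec : ∀ h, ((Δ h).map fun p => p.1 ⊗ₜ[ℂ] p.2).sum = comul h
  ε : H →ₗ[ℂ] ℂ
  S : H →ₗ[ℂ] H
  Sinv : H →ₗ[ℂ] H
  S_Sinv : ∀ h, S (Sinv h) = h
  Sinv_S : ∀ h, Sinv (S h) = h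
  comul_one : comul 1 = (1 : H) ⊗ₜ[ℂ] (1 : H)
  comul_mul : ∀ h g, comul (h * g) = comul h * comul g
  eps_one : ε 1 = 1
  eps_mul : ∀ h g, ε (h * g) = ε h * ε g
  counit_left : ∀ h, ((Δ h).map fun p => ε p.1 • p.2).sum = h
  counit_right : ∀ h, ((Δ h).map fun p => ε p.2 • p.1).sum = h
  antipode_left : ∀ h, ((Δ h).map fun p => S p.1 * p.2).sum = algebraMap ℂ H (ε h)
  antipode_right : ∀ h, ((Δ h).map fun p => p.1 * S p.2).sum = algebraMap ℂ H (ε h)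
  coassoc : ∀ h,
    (TensorProduct.assoc ℂ H H H)
        ((TensorProduct.map comul LinearMap.id) (comul h))
      = (TensorProduct.map LinearMap.id comul) (comul h)
  S_one : S 1 = 1
  S_antimul : ∀ h g, S (h * g) = S g * S h

/-- The chosen iterated Sweedler components `h₍₁₎ ⊗ h₍₂₎ ⊗ h₍₃₎`
(coming from `(Δ ⊗ id) ∘ Δ`). -/
def HopfData.Δ3 {H : Type*} [Ring H] [Algebra ℂ H] (D : HopfData H) (h : H) :
    List (H × H × H) :=
  (D.Δ h).flatMap fun p => (D.Δ p.1).map fun q => (q.1, q.2, p.2)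

/-- A unital braided commutative Yetter–Drinfeld algebra over the Hopf algebra
presented by `D`: a right module-algebra action `act` (written `m ◁ h`) together
with a left coaction `coact` (with chosen Sweedler representatives
`θ m = m₍₋₁₎ ⊗ m₍₀₎`) satisfying the Yetter–Drinfeld compatibility
`θ(m ◁ h) = S⁻¹(h₍₃₎) m₍₋₁₎ h₍₁₎ ⊗ (m₍₀₎ ◁ h₍₂₎)` and braided commutativity
`m n = (n ◁ m₍₋₁₎) m₍₀₎`. -/
structure YDData (H N : Type*) [Ring H] [Algebra ℂ H] [Ring N] [Algebra ℂ N]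
    (D : HopfData H) where
  act : N →ₗ[ℂ] H →ₗ[ℂ] N
  act_one : ∀ m, act m 1 = m
  act_mulH : ∀ m h g, act m (h * g) = act (act m h) g
  act_alg : ∀ m n h, act (m * n) h = ((D.Δ h).map fun p => act m p.1 * act n p.2).sum
  act_unit : ∀ h, act 1 h = D.ε h • (1 : N)
  coact : N →ₗ[ℂ] H ⊗[ℂ] N
  θ : N → List (H × N)
  θ_spec : ∀ m, ((θ m).map fun p => p.1 ⊗ₜ[ℂ] p.2).sum = coact m
  coact_counit : ∀ m, ((θ m).map fun p => D.ε p.1 • p.2).sum = m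
  coact_coassoc : ∀ m,
    (TensorProduct.assoc ℂ H H N)
        ((TensorProduct.map D.comul LinearMap.id) (coact m))
      = (TensorProduct.map LinearMap.id coact) (coact m)
  coact_one : coact 1 = (1 : H) ⊗ₜ[ℂ] (1 : N)
  coact_mul : ∀ m n, coact (m * n)
      = (((θ m).flatMap fun p => (θ n).map fun q =>
            (q.1 * p.1) ⊗ₜ[ℂ] (p.2 * q.2))).sum
  yd : ∀ m h, coact (act m h)
      = (((D.Δ3 h).flatMap fun t => (θ m).map fun p =>
            (D.Sinv t.2.2 * p.1 * t.1) ⊗ₜ[ℂ] act p.2 t.2.1)).sum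
  bc : ∀ m n, m * n = ((θ m).map fun p => act n p.1 * p.2).sum

/-- The canonical map `γ(m) = m₍₀₎ ◁ S⁻¹(m₍₋₁₎)`. -/
def YDData.gamma {H N : Type*} [Ring H] [Algebra ℂ H] [Ring N] [Algebra ℂ N]
    {D : HopfData H} (Y : YDData H N D) (m : N) : N :=
  ((Y.θ m).map fun p => Y.act p.2 (D.Sinv p.1)).sum

/-- The canonical map `γ̂(m) = m₍₀₎ ◁ S²(m₍₋₁₎)`. -/
def YDData.gammaHat {H N : Type*} [Ring H] [Algebra ℂ H] [Ring N] [Algebra ℂ N]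
    {D : HopfData H} (Y : YDData H N D) (m : N) : N :=
  ((Y.θ m).map fun p => Y.act p.2 (D.S (D.S p.1))).sum

section ListHelpers

variable {α β M M' : Type*} [AddCommMonoid M] [AddCommMonoid M']

lemma lsum_pull [Module ℂ M] [Module ℂ M'] (g : M →ₗ[ℂ] M') (l : List α) (f : α → M) :
    (l.map fun a => g (f a)).sum = g (l.map f).sum := by
  rw [map_list_sum, List.map_map]; rfl

lemma lsum_flatMap (l : List α) (F : α → List M) :
    (l.flatMap F).sum = (l.map fun a => (F a).sum).sum := by
  induction l with
  | nil => simp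
  | cons a t ih => simp [List.flatMap_cons, List.sum_append, ih]

lemma lmap_congr (l : List α) (f g : α → M) (h : ∀ a, f a = g a) :
    (l.map f).sum = (l.map g).sum := by
  induction l with
  | nil => rfl
  | cons a t ih => simp [h a, ih]

lemma lsum_swap (l : List α) (l' : List β) (f : α → β → M) :
    ((l.flatMap fun a => l'.map fun b => f a b)).sum
      = ((l'.flatMap fun b => l.map fun a => f a b)).sum := by
  rw [lsum_flatMap, lsum_flatMap]
  induction l with
  | nil => simp
  | cons a t ih =>
      simp only [List.map_cons, List.sum_cons, ih, List.sum_map_add]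

lemma pull_flat [Module ℂ M] [Module ℂ M'] (g : M →ₗ[ℂ] M') (l : List α) (l' : α → List β)
    (f : α → β → M) :
    g ((l.flatMap fun a => (l' a).map fun b => f a b)).sum
      = ((l.flatMap fun a => (l' a).map fun b => g (f a b))).sum := by
  rw [lsum_flatMap, lsum_flatMap, ← lsum_pull g]
  exact lmap_congr _ _ _ fun a => (lsum_pull g (l' a) (f a)).symm

end ListHelpers

namespace HopfData

variable {H : Type*} [Ring H] [Algebra ℂ H] (D : HopfData H)

lemma Sinv_one : D.Sinv 1 = 1 := by
  have := D.Sinv_S 1; rwa [D.S_one] at this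

lemma Sinv_antimul (a b : H) : D.Sinv (a * b) = D.Sinv b * D.Sinv a := by
  have h1 : D.S (D.Sinv b * D.Sinv a) = a * b := by
    rw [D.S_antimul, D.S_Sinv, D.S_Sinv]
  rw [← h1, D.Sinv_S]

lemma antipode_right' (h : H) :
    ((D.Δ h).map fun p => p.1 * D.S p.2).sum = D.ε h • (1 : H) := by
  rw [D.antipode_right, Algebra.algebraMap_eq_smul_one]

lemma sinv_left (h : H) :
    ((D.Δ h).map fun p => p.2 * D.Sinv p.1).sum = D.ε h • (1 : H) := by
  have := congrArg D.Sinv (D.antipode_right h)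
  rw [map_list_sum, List.map_map] at this
  simp only [Function.comp_def, Sinv_antimul, D.Sinv_S] at this
  rw [Algebra.algebraMap_eq_smul_one, map_smul, D.Sinv_one] at this
  exact this

lemma sinv_right (h : H) :
    ((D.Δ h).map fun p => D.Sinv p.2 * p.1).sum = D.ε h • (1 : H) := by
  have := congrArg D.Sinv (D.antipode_left h)
  rw [map_list_sum, List.map_map] at this
  simp only [Function.comp_def, Sinv_antimul, D.Sinv_S] at this
  rw [Algebra.algebraMap_eq_smul_one, map_smul, D.Sinv_one] at this
  exact this

lemma s2_right (h : H) :
    ((D.Δ h).map fun p => D.S (D.S p.2) * D.S p.1).sum = D.ε h • (1 : H) := by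
  have := congrArg D.S (D.antipode_right h)
  rw [map_list_sum, List.map_map] at this
  simp only [Function.comp_def, D.S_antimul] at this
  rw [Algebra.algebraMap_eq_smul_one, map_smul, D.S_one] at this
  exact this

end HopfData

namespace YDData

open TensorProduct LinearMap

variable {H N : Type*} [Ring H] [Algebra ℂ H] [Ring N] [Algebra ℂ N]
  {D : HopfData H} (Y : YDData H N D)

/-- `h ⊗ n ↦ n ◁ h`. -/
def actT : H ⊗[ℂ] N →ₗ[ℂ] N := TensorProduct.lift Y.act.flip

@[simp] lemma actT_tmul (x : H) (y : N) : Y.actT (x ⊗ₜ[ℂ] y) = Y.act y x := rfl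

/-- `h ⊗ n ↦ n ◁ S⁻¹ h`. -/
def gL : H ⊗[ℂ] N →ₗ[ℂ] N := Y.actT ∘ₗ TensorProduct.map D.Sinv LinearMap.id

/-- `h ⊗ n ↦ n ◁ S² h`. -/
def ghL : H ⊗[ℂ] N →ₗ[ℂ] N := Y.actT ∘ₗ TensorProduct.map (D.S ∘ₗ D.S) LinearMap.id

@[simp] lemma gL_tmul (x : H) (y : N) : Y.gL (x ⊗ₜ[ℂ] y) = Y.act y (D.Sinv x) := rfl

@[simp] lemma ghL_tmul (x : H) (y : N) : Y.ghL (x ⊗ₜ[ℂ] y) = Y.act y (D.S (D.S x)) := rfl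

lemma gamma_eq (m : N) : Y.gamma m = Y.gL (Y.coact m) := by
  rw [← Y.θ_spec, ← lsum_pull]
  exact lmap_congr _ _ _ fun p => rfl

lemma gammaHat_eq (m : N) : Y.gammaHat m = Y.ghL (Y.coact m) := by
  rw [← Y.θ_spec, ← lsum_pull]
  exact lmap_congr _ _ _ fun p => rfl

end YDData

namespace HopfData

open TensorProduct LinearMap

variable {H : Type*} [Ring H] [Algebra ℂ H] (D : HopfData H)

lemma Δ3_tensor (h : H) :
    ((D.Δ3 h).map fun t => t.1 ⊗ₜ[ℂ] (t.2.1 ⊗ₜ[ℂ] t.2.2)).sum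
      = ((D.Δ h).flatMap fun p => (D.Δ p.2).map fun r =>
          p.1 ⊗ₜ[ℂ] (r.1 ⊗ₜ[ℂ] r.2)).sum := by
  have lhs : ((D.Δ3 h).map fun t => t.1 ⊗ₜ[ℂ] (t.2.1 ⊗ₜ[ℂ] t.2.2)).sum
      = (TensorProduct.map LinearMap.id D.comul) (D.comul h) := by
    rw [← D.coassoc]
    unfold HopfData.Δ3
    rw [List.map_flatMap, lsum_flatMap]
    have step : ∀ p : H × H,
        (((D.Δ p.1).map fun q => (q.1, q.2, p.2)).map
            fun t : H × H × H => t.1 ⊗ₜ[ℂ] (t.2.1 ⊗ₜ[ℂ] t.2.2)).sum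
          = ((TensorProduct.assoc ℂ H H H).toLinearMap ∘ₗ
              (TensorProduct.mk ℂ (H ⊗[ℂ] H) H).flip p.2) (D.comul p.1) := by
      intro p
      rw [List.map_map, ← D.Δ_spec, ← lsum_pull]
      exact lmap_congr _ _ _ fun q => rfl
    have : ((D.Δ h).map fun p =>
        (((D.Δ p.1).map fun q => (q.1, q.2, p.2)).map
            fun t : H × H × H => t.1 ⊗ₜ[ℂ] (t.2.1 ⊗ₜ[ℂ] t.2.2)).sum).sum
        = ((D.Δ h).map fun p =>
            ((TensorProduct.assoc ℂ H H H).toLinearMap ∘ₗ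
              TensorProduct.map D.comul LinearMap.id) (p.1 ⊗ₜ[ℂ] p.2)).sum :=
      lmap_congr _ _ _ fun p => by rw [step p]; rfl
    rw [this, lsum_pull, D.Δ_spec]
    rfl
  have rhs : ((D.Δ h).flatMap fun p => (D.Δ p.2).map fun r =>
          p.1 ⊗ₜ[ℂ] (r.1 ⊗ₜ[ℂ] r.2)).sum
      = (TensorProduct.map LinearMap.id D.comul) (D.comul h) := by
    rw [lsum_flatMap]
    have : ((D.Δ h).map fun p =>
        (((D.Δ p.2).map fun r => p.1 ⊗ₜ[ℂ] (r.1 ⊗ₜ[ℂ] r.2))).sum).sum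
        = ((D.Δ h).map fun p =>
            (TensorProduct.map LinearMap.id D.comul) (p.1 ⊗ₜ[ℂ] p.2)).sum := by
      refine lmap_congr _ _ _ fun p => ?_
      have : (((D.Δ p.2).map fun r => p.1 ⊗ₜ[ℂ] (r.1 ⊗ₜ[ℂ] r.2))).sum
          = (TensorProduct.mk ℂ H (H ⊗[ℂ] H) p.1) (D.comul p.2) := by
        rw [← D.Δ_spec, ← lsum_pull]
        exact lmap_congr _ _ _ fun r => rfl
      rw [this]; rfl
    rw [this, lsum_pull, D.Δ_spec]
  rw [lhs, rhs]

lemma Δ3_apply {X : Type*} [AddCommMonoid X] [Module ℂ X]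
    (T : H ⊗[ℂ] (H ⊗[ℂ] H) →ₗ[ℂ] X) (h : H) :
    ((D.Δ3 h).map fun t => T (t.1 ⊗ₜ[ℂ] (t.2.1 ⊗ₜ[ℂ] t.2.2))).sum
      = ((D.Δ h).flatMap fun p => (D.Δ p.2).map fun r =>
          T (p.1 ⊗ₜ[ℂ] (r.1 ⊗ₜ[ℂ] r.2))).sum := by
  rw [lsum_pull, Δ3_tensor]
  exact pull_flat T _ _ _

end HopfData

namespace YDData

open TensorProduct LinearMap

variable {H N : Type*} [Ring H] [Algebra ℂ H] [Ring N] [Algebra ℂ N]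
  {D : HopfData H} (Y : YDData H N D)

lemma θθ_tensor (m : N) :
    ((Y.θ m).flatMap fun p => (Y.θ p.2).map fun r =>
        p.1 ⊗ₜ[ℂ] (r.1 ⊗ₜ[ℂ] r.2)).sum
      = ((Y.θ m).flatMap fun p => (D.Δ p.1).map fun q =>
          q.1 ⊗ₜ[ℂ] (q.2 ⊗ₜ[ℂ] p.2)).sum := by
  have lhs : ((Y.θ m).flatMap fun p => (Y.θ p.2).map fun r =>
        p.1 ⊗ₜ[ℂ] (r.1 ⊗ₜ[ℂ] r.2)).sum
      = (TensorProduct.map LinearMap.id Y.coact) (Y.coact m) := by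
    rw [lsum_flatMap]
    have : ((Y.θ m).map fun p =>
        ((Y.θ p.2).map fun r => p.1 ⊗ₜ[ℂ] (r.1 ⊗ₜ[ℂ] r.2)).sum).sum
        = ((Y.θ m).map fun p =>
            (TensorProduct.map LinearMap.id Y.coact) (p.1 ⊗ₜ[ℂ] p.2)).sum := by
      refine lmap_congr _ _ _ fun p => ?_
      have : ((Y.θ p.2).map fun r => p.1 ⊗ₜ[ℂ] (r.1 ⊗ₜ[ℂ] r.2)).sum
          = (TensorProduct.mk ℂ H (H ⊗[ℂ] N) p.1) (Y.coact p.2) := by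
        rw [← Y.θ_spec, ← lsum_pull]
        exact lmap_congr _ _ _ fun r => rfl
      rw [this]; rfl
    rw [this, lsum_pull, Y.θ_spec]
  have rhs : ((Y.θ m).flatMap fun p => (D.Δ p.1).map fun q =>
          q.1 ⊗ₜ[ℂ] (q.2 ⊗ₜ[ℂ] p.2)).sum
      = (TensorProduct.map LinearMap.id Y.coact) (Y.coact m) := by
    rw [← Y.coact_coassoc, lsum_flatMap]
    have : ((Y.θ m).map fun p =>
        ((D.Δ p.1).map fun q => q.1 ⊗ₜ[ℂ] (q.2 ⊗ₜ[ℂ] p.2)).sum).sum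
        = ((Y.θ m).map fun p =>
            ((TensorProduct.assoc ℂ H H N).toLinearMap ∘ₗ
              TensorProduct.map D.comul LinearMap.id) (p.1 ⊗ₜ[ℂ] p.2)).sum := by
      refine lmap_congr _ _ _ fun p => ?_
      have : ((D.Δ p.1).map fun q => q.1 ⊗ₜ[ℂ] (q.2 ⊗ₜ[ℂ] p.2)).sum
          = ((TensorProduct.assoc ℂ H H N).toLinearMap ∘ₗ
              (TensorProduct.mk ℂ (H ⊗[ℂ] H) N).flip p.2) (D.comul p.1) := by
        rw [← D.Δ_spec, ← lsum_pull]
        exact lmap_congr _ _ _ fun q => rfl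
      rw [this]; rfl
    rw [this, lsum_pull, Y.θ_spec]
    rfl
  rw [lhs, rhs]

lemma θθ_apply {X : Type*} [AddCommMonoid X] [Module ℂ X]
    (T : H ⊗[ℂ] (H ⊗[ℂ] N) →ₗ[ℂ] X) (m : N) :
    ((Y.θ m).flatMap fun p => (Y.θ p.2).map fun r =>
        T (p.1 ⊗ₜ[ℂ] (r.1 ⊗ₜ[ℂ] r.2))).sum
      = ((Y.θ m).flatMap fun p => (D.Δ p.1).map fun q =>
          T (q.1 ⊗ₜ[ℂ] (q.2 ⊗ₜ[ℂ] p.2))).sum :=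
  (pull_flat T _ _ _).symm.trans <| (congrArg T (Y.θθ_tensor m)).trans <|
    pull_flat T _ _ _

lemma gamma_act (n : N) (h : H) :
    Y.gamma (Y.act n h)
      = ((Y.θ n).map fun p => Y.act p.2 (D.Sinv p.1 * D.Sinv (D.Sinv h))).sum := by
  calc Y.gamma (Y.act n h)
      = Y.gL (((D.Δ3 h).flatMap fun t => (Y.θ n).map fun p =>
          (D.Sinv t.2.2 * p.1 * t.1) ⊗ₜ[ℂ] Y.act p.2 t.2.1).sum) := by
        rw [Y.gamma_eq, Y.yd]
    _ = ((Y.θ n).flatMap fun p => (D.Δ3 h).map fun t =>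
          Y.act p.2 (t.2.1 * (D.Sinv t.1 * (D.Sinv p.1 * D.Sinv (D.Sinv t.2.2))))).sum := by
        refine (pull_flat Y.gL _ _ _).trans ?_
        refine ((lsum_swap _ _ _).trans ?_)
        rw [lsum_flatMap, lsum_flatMap]
        refine lmap_congr _ _ _ fun p => lmap_congr _ _ _ fun t => ?_
        rw [Y.gL_tmul, D.Sinv_antimul, D.Sinv_antimul, ← Y.act_mulH]
    _ = ((Y.θ n).map fun p => Y.act p.2 (D.Sinv p.1 * D.Sinv (D.Sinv h))).sum := by
        rw [lsum_flatMap]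
        refine lmap_congr _ _ _ fun p => ?_
        unfold HopfData.Δ3
        rw [List.map_flatMap, lsum_flatMap]
        have inner : ∀ p' : H × H,
            ((((D.Δ p'.1).map fun q => ((q.1, q.2, p'.2) : H × H × H)).map fun t =>
              Y.act p.2 (t.2.1 * (D.Sinv t.1 * (D.Sinv p.1 * D.Sinv (D.Sinv t.2.2))))).sum)
            = (Y.act p.2 ∘ₗ LinearMap.mulLeft ℂ (D.Sinv p.1) ∘ₗ D.Sinv ∘ₗ D.Sinv)
                (D.ε p'.1 • p'.2) := by
          intro p'
          rw [List.map_map]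
          calc _ = ((D.Δ p'.1).map fun q =>
                (Y.act p.2 ∘ₗ LinearMap.mulRight ℂ (D.Sinv p.1 * D.Sinv (D.Sinv p'.2)))
                  (q.2 * D.Sinv q.1)).sum :=
              lmap_congr _ _ _ fun q => by simp [mul_assoc]
            _ = (Y.act p.2 ∘ₗ LinearMap.mulRight ℂ (D.Sinv p.1 * D.Sinv (D.Sinv p'.2)))
                (((D.Δ p'.1).map fun q => q.2 * D.Sinv q.1).sum) := lsum_pull _ _ _
            _ = _ := by rw [D.sinv_left]; simp
        calc _ = ((D.Δ h).map fun p' =>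
              (Y.act p.2 ∘ₗ LinearMap.mulLeft ℂ (D.Sinv p.1) ∘ₗ D.Sinv ∘ₗ D.Sinv)
                (D.ε p'.1 • p'.2)).sum := lmap_congr _ _ _ fun p' => inner p'
          _ = (Y.act p.2 ∘ₗ LinearMap.mulLeft ℂ (D.Sinv p.1) ∘ₗ D.Sinv ∘ₗ D.Sinv)
                (((D.Δ h).map fun p' => D.ε p'.1 • p'.2).sum) := lsum_pull _ _ _
          _ = _ := by rw [D.counit_left]; simp

end YDData

namespace YDData

open TensorProduct LinearMap

variable {H N : Type*} [Ring H] [Algebra ℂ H] [Ring N] [Algebra ℂ N]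
  {D : HopfData H} (Y : YDData H N D)

lemma gammaHat_act (n : N) (h : H) :
    Y.gammaHat (Y.act n h)
      = ((Y.θ n).map fun p => Y.act p.2 (D.S (D.S p.1) * D.S (D.S h))).sum := by
  calc Y.gammaHat (Y.act n h)
      = Y.ghL (((D.Δ3 h).flatMap fun t => (Y.θ n).map fun p =>
          (D.Sinv t.2.2 * p.1 * t.1) ⊗ₜ[ℂ] Y.act p.2 t.2.1).sum) := by
        rw [Y.gammaHat_eq, Y.yd]
    _ = ((Y.θ n).flatMap fun p => (D.Δ3 h).map fun t =>
          Y.act p.2 (t.2.1 * (D.S t.2.2 * (D.S (D.S p.1) * D.S (D.S t.1))))).sum := by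
        refine (pull_flat Y.ghL _ _ _).trans ?_
        refine ((lsum_swap _ _ _).trans ?_)
        rw [lsum_flatMap, lsum_flatMap]
        refine lmap_congr _ _ _ fun p => lmap_congr _ _ _ fun t => ?_
        simp only [Y.ghL_tmul, D.S_antimul, D.S_Sinv, ← Y.act_mulH, mul_assoc]
    _ = ((Y.θ n).map fun p => Y.act p.2 (D.S (D.S p.1) * D.S (D.S h))).sum := by
        rw [lsum_flatMap]
        refine lmap_congr _ _ _ fun p => ?_
        set T : H ⊗[ℂ] (H ⊗[ℂ] H) →ₗ[ℂ] N :=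
          Y.act p.2 ∘ₗ LinearMap.mul' ℂ H
            ∘ₗ TensorProduct.map LinearMap.id
                (LinearMap.mul' ℂ H ∘ₗ TensorProduct.map LinearMap.id (D.S ∘ₗ D.S))
            ∘ₗ (TensorProduct.assoc ℂ H H H).toLinearMap
            ∘ₗ (TensorProduct.comm ℂ H (H ⊗[ℂ] H)).toLinearMap
            ∘ₗ TensorProduct.map LinearMap.id
                (TensorProduct.map LinearMap.id
                  (LinearMap.mulRight ℂ (D.S (D.S p.1)) ∘ₗ D.S)) with hT
        have ev : ∀ a b c : H, T (a ⊗ₜ[ℂ] (b ⊗ₜ[ℂ] c))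
            = Y.act p.2 (b * ((D.S c * D.S (D.S p.1)) * D.S (D.S a))) := by
          intro a b c
          simp [hT, mul_assoc]
        calc ((D.Δ3 h).map fun t =>
              Y.act p.2 (t.2.1 * (D.S t.2.2 * (D.S (D.S p.1) * D.S (D.S t.1))))).sum
            = ((D.Δ3 h).map fun t => T (t.1 ⊗ₜ[ℂ] (t.2.1 ⊗ₜ[ℂ] t.2.2))).sum :=
            lmap_congr _ _ _ fun t => by rw [ev]; simp [mul_assoc]
          _ = ((D.Δ h).flatMap fun p' => (D.Δ p'.2).map fun r =>
                T (p'.1 ⊗ₜ[ℂ] (r.1 ⊗ₜ[ℂ] r.2))).sum := D.Δ3_apply T h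
          _ = ((D.Δ h).map fun p' =>
                (Y.act p.2 ∘ₗ LinearMap.mulLeft ℂ (D.S (D.S p.1)) ∘ₗ D.S ∘ₗ D.S)
                  (D.ε p'.2 • p'.1)).sum := by
              rw [lsum_flatMap]
              refine lmap_congr _ _ _ fun p' => ?_
              calc _ = ((D.Δ p'.2).map fun r =>
                    (Y.act p.2 ∘ₗ
                      LinearMap.mulRight ℂ (D.S (D.S p.1) * D.S (D.S p'.1)))
                      (r.1 * D.S r.2)).sum :=
                  lmap_congr _ _ _ fun r => by rw [ev]; simp [mul_assoc]
                _ = (Y.act p.2 ∘ₗ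
                      LinearMap.mulRight ℂ (D.S (D.S p.1) * D.S (D.S p'.1)))
                      (((D.Δ p'.2).map fun r => r.1 * D.S r.2).sum) := lsum_pull _ _ _
                _ = _ := by rw [D.antipode_right']; simp
          _ = (Y.act p.2 ∘ₗ LinearMap.mulLeft ℂ (D.S (D.S p.1)) ∘ₗ D.S ∘ₗ D.S)
                (((D.Δ h).map fun p' => D.ε p'.2 • p'.1).sum) := lsum_pull _ _ _
          _ = _ := by rw [D.counit_right]; simp

end YDData

namespace YDData

open TensorProduct LinearMap

variable {H N : Type*} [Ring H] [Algebra ℂ H] [Ring N] [Algebra ℂ N]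
  {D : HopfData H} (Y : YDData H N D)

lemma gamma_gammaHat (m : N) : Y.gamma (Y.gammaHat m) = m := by
  have lin : Y.gamma (Y.gammaHat m)
      = ((Y.θ m).map fun p => Y.gamma (Y.act p.2 (D.S (D.S p.1)))).sum := by
    calc Y.gamma (Y.gammaHat m)
        = (Y.gL ∘ₗ Y.coact) (((Y.θ m).map fun p => Y.act p.2 (D.S (D.S p.1))).sum) :=
        Y.gamma_eq _
      _ = ((Y.θ m).map fun p =>
            (Y.gL ∘ₗ Y.coact) (Y.act p.2 (D.S (D.S p.1)))).sum := (lsum_pull _ _ _).symm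
      _ = _ := lmap_congr _ _ _ fun p => (Y.gamma_eq _).symm
  rw [lin]
  calc ((Y.θ m).map fun p => Y.gamma (Y.act p.2 (D.S (D.S p.1)))).sum
      = ((Y.θ m).map fun p =>
          ((Y.θ p.2).map fun r => Y.act r.2 (D.Sinv r.1 * p.1)).sum).sum :=
      lmap_congr _ _ _ fun p => by
        rw [Y.gamma_act]
        exact lmap_congr _ _ _ fun r => by rw [D.Sinv_S, D.Sinv_S]
    _ = ((Y.θ m).flatMap fun p => (Y.θ p.2).map fun r =>
          Y.act r.2 (D.Sinv r.1 * p.1)).sum := (lsum_flatMap _ _).symm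
    _ = ((Y.θ m).flatMap fun p => (D.Δ p.1).map fun q =>
          Y.act p.2 (D.Sinv q.2 * q.1)).sum := by
        set T : H ⊗[ℂ] (H ⊗[ℂ] N) →ₗ[ℂ] N :=
          Y.actT ∘ₗ TensorProduct.map
              (LinearMap.mul' ℂ H ∘ₗ TensorProduct.map D.Sinv LinearMap.id
                ∘ₗ (TensorProduct.comm ℂ H H).toLinearMap) LinearMap.id
            ∘ₗ (TensorProduct.assoc ℂ H H N).symm.toLinearMap with hT
        have ev : ∀ (a b : H) (x : N), T (a ⊗ₜ[ℂ] (b ⊗ₜ[ℂ] x))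
            = Y.act x (D.Sinv b * a) := by
          intro a b x; simp [hT]
        calc ((Y.θ m).flatMap fun p => (Y.θ p.2).map fun r =>
              Y.act r.2 (D.Sinv r.1 * p.1)).sum
            = ((Y.θ m).flatMap fun p => (Y.θ p.2).map fun r =>
                T (p.1 ⊗ₜ[ℂ] (r.1 ⊗ₜ[ℂ] r.2))).sum := by
              rw [lsum_flatMap, lsum_flatMap]
              exact lmap_congr _ _ _ fun p => lmap_congr _ _ _ fun r => (ev _ _ _).symm
          _ = ((Y.θ m).flatMap fun p => (D.Δ p.1).map fun q =>
                T (q.1 ⊗ₜ[ℂ] (q.2 ⊗ₜ[ℂ] p.2))).sum := Y.θθ_apply T m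
          _ = _ := by
              rw [lsum_flatMap, lsum_flatMap]
              exact lmap_congr _ _ _ fun p => lmap_congr _ _ _ fun q => ev _ _ _
    _ = ((Y.θ m).map fun p => D.ε p.1 • p.2).sum := by
        rw [lsum_flatMap]
        refine lmap_congr _ _ _ fun p => ?_
        calc ((D.Δ p.1).map fun q => Y.act p.2 (D.Sinv q.2 * q.1)).sum
            = Y.act p.2 (((D.Δ p.1).map fun q => D.Sinv q.2 * q.1).sum) :=
            lsum_pull _ _ _
          _ = Y.act p.2 (D.ε p.1 • 1) := by rw [D.sinv_right]
          _ = D.ε p.1 • p.2 := by rw [map_smul, Y.act_one]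
    _ = m := Y.coact_counit m

lemma gammaHat_gamma (m : N) : Y.gammaHat (Y.gamma m) = m := by
  have lin : Y.gammaHat (Y.gamma m)
      = ((Y.θ m).map fun p => Y.gammaHat (Y.act p.2 (D.Sinv p.1))).sum := by
    calc Y.gammaHat (Y.gamma m)
        = (Y.ghL ∘ₗ Y.coact) (((Y.θ m).map fun p => Y.act p.2 (D.Sinv p.1)).sum) :=
        Y.gammaHat_eq _
      _ = ((Y.θ m).map fun p =>
            (Y.ghL ∘ₗ Y.coact) (Y.act p.2 (D.Sinv p.1))).sum := (lsum_pull _ _ _).symm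
      _ = _ := lmap_congr _ _ _ fun p => (Y.gammaHat_eq _).symm
  rw [lin]
  calc ((Y.θ m).map fun p => Y.gammaHat (Y.act p.2 (D.Sinv p.1))).sum
      = ((Y.θ m).map fun p =>
          ((Y.θ p.2).map fun r => Y.act r.2 (D.S (D.S r.1) * D.S p.1)).sum).sum :=
      lmap_congr _ _ _ fun p => by
        rw [Y.gammaHat_act]
        exact lmap_congr _ _ _ fun r => by rw [D.S_Sinv]
    _ = ((Y.θ m).flatMap fun p => (Y.θ p.2).map fun r =>
          Y.act r.2 (D.S (D.S r.1) * D.S p.1)).sum := (lsum_flatMap _ _).symm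
    _ = ((Y.θ m).flatMap fun p => (D.Δ p.1).map fun q =>
          Y.act p.2 (D.S (D.S q.2) * D.S q.1)).sum := by
        set T : H ⊗[ℂ] (H ⊗[ℂ] N) →ₗ[ℂ] N :=
          Y.actT ∘ₗ TensorProduct.map
              (LinearMap.mul' ℂ H ∘ₗ TensorProduct.map (D.S ∘ₗ D.S) D.S
                ∘ₗ (TensorProduct.comm ℂ H H).toLinearMap) LinearMap.id
            ∘ₗ (TensorProduct.assoc ℂ H H N).symm.toLinearMap with hT
        have ev : ∀ (a b : H) (x : N), T (a ⊗ₜ[ℂ] (b ⊗ₜ[ℂ] x))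
            = Y.act x (D.S (D.S b) * D.S a) := by
          intro a b x; simp [hT]
        calc ((Y.θ m).flatMap fun p => (Y.θ p.2).map fun r =>
              Y.act r.2 (D.S (D.S r.1) * D.S p.1)).sum
            = ((Y.θ m).flatMap fun p => (Y.θ p.2).map fun r =>
                T (p.1 ⊗ₜ[ℂ] (r.1 ⊗ₜ[ℂ] r.2))).sum := by
              rw [lsum_flatMap, lsum_flatMap]
              exact lmap_congr _ _ _ fun p => lmap_congr _ _ _ fun r => (ev _ _ _).symm
          _ = ((Y.θ m).flatMap fun p => (D.Δ p.1).map fun q =>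
                T (q.1 ⊗ₜ[ℂ] (q.2 ⊗ₜ[ℂ] p.2))).sum := Y.θθ_apply T m
          _ = _ := by
              rw [lsum_flatMap, lsum_flatMap]
              exact lmap_congr _ _ _ fun p => lmap_congr _ _ _ fun q => ev _ _ _
    _ = ((Y.θ m).map fun p => D.ε p.1 • p.2).sum := by
        rw [lsum_flatMap]
        refine lmap_congr _ _ _ fun p => ?_
        calc ((D.Δ p.1).map fun q => Y.act p.2 (D.S (D.S q.2) * D.S q.1)).sum
            = Y.act p.2 (((D.Δ p.1).map fun q => D.S (D.S q.2) * D.S q.1).sum) :=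
            lsum_pull _ _ _
          _ = Y.act p.2 (D.ε p.1 • 1) := by rw [D.s2_right]
          _ = D.ε p.1 • p.2 := by rw [map_smul, Y.act_one]
    _ = m := Y.coact_counit m

end YDData

/-- the canonical maps `γ` and `γ̂` of a unital braided commutative
Yetter–Drinfeld algebra are mutually inverse bijections of `N`. -/
theorem stmt0 {H N : Type*} [Ring H] [Algebra ℂ H] [StarRing H]
    [Ring N] [Algebra ℂ N] [StarRing N]
    (D : HopfData H) (Y : YDData H N D) :
    (∀ m : N, Y.gamma (Y.gammaHat m) = m) ∧ (∀ m : N, Y.gammaHat (Y.gamma m) = m) ∧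
      Function.Bijective Y.gamma ∧ Function.Bijective Y.gammaHat := by
  refine ⟨Y.gamma_gammaHat, Y.gammaHat_gamma, ?_, ?_⟩
  · exact Function.bijective_iff_has_inverse.mpr
      ⟨Y.gammaHat, Y.gammaHat_gamma, Y.gamma_gammaHat⟩
  · exact Function.bijective_iff_has_inverse.mpr
      ⟨Y.gamma, Y.gamma_gammaHat, Y.gammaHat_gamma⟩
end
end

section
/- With H, N, γ as above (γ(m) = m₍₀₎ ◁ S⁻¹(m₍₋₁₎)), the map γ is an algebra homomorphism: γ(mn) = γ(m)γ(n) for all m, n ∈ N. -/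
open scoped TensorProduct

noncomputable section

namespace HopfAux
open TensorProduct

section util
variable {α β γ : Type*} {M : Type*} {P : Type*} [AddCommMonoid M] [Module ℂ M]
  [AddCommMonoid P] [Module ℂ P]

lemma sumPull (Φ : M →ₗ[ℂ] P) (l : List α) (f : α → M) :
    (l.map fun a => Φ (f a)).sum = Φ (l.map f).sum := by
  rw [map_list_sum, List.map_map]; rfl

lemma sum_flat (l : List α) (g : α → List γ) (F : γ → M) :
    ((l.flatMap g).map F).sum = (l.map fun a => ((g a).map F).sum).sum := by
  induction l with
  | nil => rfl
  | cons a t ih =>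
      simp only [List.flatMap_cons, List.map_append, List.sum_append, ih,
        List.map_cons, List.sum_cons]

lemma sum_swap (l : List α) (l' : List β) (f : α → β → M) :
    (l.map fun a => (l'.map fun b => f a b).sum).sum
      = (l'.map fun b => (l.map fun a => f a b).sum).sum := by
  induction l with
  | nil => simp
  | cons a t ih => simp [List.sum_map_add, ih]

end util

section hopf
variable {H : Type*} [Ring H] [Algebra ℂ H] (D : HopfData H)
variable {M : Type*} [AddCommMonoid M] [Module ℂ M]

lemma keyD (Φ : H ⊗[ℂ] H →ₗ[ℂ] M) (h : H) :
    ((D.Δ h).map fun p => Φ (p.1 ⊗ₜ[ℂ] p.2)).sum = Φ (D.comul h) := by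
  rw [sumPull, D.Δ_spec]

lemma S_inj : Function.Injective D.S := fun a b hh => by
  rw [← D.Sinv_S a, hh, D.Sinv_S]

lemma Sinv_one : D.Sinv 1 = 1 := by
  have := D.Sinv_S 1; rwa [D.S_one] at this

lemma Sinv_antimul (a b : H) : D.Sinv (a * b) = D.Sinv b * D.Sinv a := by
  apply S_inj D
  rw [D.S_Sinv, D.S_antimul, D.S_Sinv, D.S_Sinv]

lemma S_alg (c : ℂ) : D.S (algebraMap ℂ H c) = algebraMap ℂ H c := by
  rw [Algebra.algebraMap_eq_smul_one, map_smul, D.S_one]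

lemma c3 (x : H) :
    ((D.Δ x).map fun p => D.Sinv p.2 * p.1).sum = algebraMap ℂ H (D.ε x) := by
  apply S_inj D
  rw [map_list_sum, List.map_map, S_alg]
  have : (D.S ∘ fun p : H × H => D.Sinv p.2 * p.1) = fun p : H × H => D.S p.1 * p.2 := by
    funext p; simp [D.S_antimul, D.S_Sinv]
  rw [this, D.antipode_left]

lemma c4 (x : H) :
    ((D.Δ x).map fun p => p.2 * D.Sinv p.1).sum = algebraMap ℂ H (D.ε x) := by
  apply S_inj D
  rw [map_list_sum, List.map_map, S_alg]
  have : (D.S ∘ fun p : H × H => p.2 * D.Sinv p.1) = fun p : H × H => p.1 * D.S p.2 := by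
    funext p; simp [D.S_antimul, D.S_Sinv]
  rw [this, D.antipode_right]

lemma c1F (F : H →ₗ[ℂ] M) (x : H) :
    ((D.Δ x).map fun p => F (D.S p.1 * p.2)).sum = D.ε x • F 1 := by
  rw [sumPull, D.antipode_left, Algebra.algebraMap_eq_smul_one, map_smul]

lemma c3F (F : H →ₗ[ℂ] M) (x : H) :
    ((D.Δ x).map fun p => F (D.Sinv p.2 * p.1)).sum = D.ε x • F 1 := by
  rw [sumPull, c3, Algebra.algebraMap_eq_smul_one, map_smul]

lemma c4F (F : H →ₗ[ℂ] M) (x : H) :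
    ((D.Δ x).map fun p => F (p.2 * D.Sinv p.1)).sum = D.ε x • F 1 := by
  rw [sumPull, c4, Algebra.algebraMap_eq_smul_one, map_smul]

lemma counitDF (F : H →ₗ[ℂ] M) (h : H) :
    ((D.Δ h).map fun p => D.ε p.1 • F p.2).sum = F h := by
  simp only [← map_smul]
  rw [sumPull, D.counit_left]

lemma counitDFr (F : H →ₗ[ℂ] M) (h : H) :
    ((D.Δ h).map fun p => D.ε p.2 • F p.1).sum = F h := by
  simp only [← map_smul]
  rw [sumPull, D.counit_right]

lemma MD (Φ : (H ⊗[ℂ] H) ⊗[ℂ] H →ₗ[ℂ] M) (h : H) :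
    ((D.Δ h).map fun p => Φ (D.comul p.1 ⊗ₜ[ℂ] p.2)).sum
      = ((D.Δ h).map fun p =>
          Φ ((TensorProduct.assoc ℂ H H H).symm (p.1 ⊗ₜ[ℂ] D.comul p.2))).sum := by
  have e1 : ((D.Δ h).map fun p => Φ (D.comul p.1 ⊗ₜ[ℂ] p.2)).sum
      = (Φ ∘ₗ map D.comul LinearMap.id) (D.comul h) := by
    rw [← keyD D (Φ ∘ₗ map D.comul LinearMap.id) h]
    simp
  have e2 : ((D.Δ h).map fun p =>
        Φ ((TensorProduct.assoc ℂ H H H).symm (p.1 ⊗ₜ[ℂ] D.comul p.2))).sum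
      = (Φ ∘ₗ (TensorProduct.assoc ℂ H H H).symm.toLinearMap ∘ₗ map LinearMap.id D.comul)
          (D.comul h) := by
    rw [← keyD D (Φ ∘ₗ (TensorProduct.assoc ℂ H H H).symm.toLinearMap
        ∘ₗ map LinearMap.id D.comul) h]
    simp
  rw [e1, e2]
  simp only [LinearMap.comp_apply, LinearEquiv.coe_coe, ← D.coassoc h,
    LinearEquiv.symm_apply_apply]

end hopf
end HopfAux
namespace HopfAux
open TensorProduct
set_option synthInstance.maxHeartbeats 1000000
set_option maxHeartbeats 1000000

section conv
variable {H : Type*} [Ring H] [Algebra ℂ H] (D : HopfData H)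
variable {M : Type*} [AddCommMonoid M] [Module ℂ M]

/-- Convolution on `Hom(H, H ⊗ H)`. -/
def conv (f g : H →ₗ[ℂ] H ⊗[ℂ] H) : H →ₗ[ℂ] H ⊗[ℂ] H :=
  (LinearMap.mul' ℂ (H ⊗[ℂ] H)) ∘ₗ (map f g) ∘ₗ D.comul

lemma keyDmul (f g : H →ₗ[ℂ] H ⊗[ℂ] H) (h : H) :
    ((D.Δ h).map fun p => f p.1 * g p.2).sum
      = (LinearMap.mul' ℂ (H ⊗[ℂ] H)) ((map f g) (D.comul h)) := by
  have := keyD D ((LinearMap.mul' ℂ (H ⊗[ℂ] H)) ∘ₗ (map f g)) h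
  simpa using this

lemma convApply (f g : H →ₗ[ℂ] H ⊗[ℂ] H) (h : H) :
    conv D f g h = ((D.Δ h).map fun p => f p.1 * g p.2).sum := by
  have := keyD D ((LinearMap.mul' ℂ (H ⊗[ℂ] H)) ∘ₗ (map f g)) h
  simp only [LinearMap.comp_apply, map_tmul, LinearMap.mul'_apply] at this
  rw [conv]; simp only [LinearMap.comp_apply]
  exact this.symm

/-- The convolution unit. -/
def cunit : H →ₗ[ℂ] H ⊗[ℂ] H := D.ε.smulRight (1 : H ⊗[ℂ] H)

lemma cunitApply (h : H) : cunit D h = D.ε h • (1 : H ⊗[ℂ] H) := rfl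

lemma conv_unit_right (f : H →ₗ[ℂ] H ⊗[ℂ] H) : conv D f (cunit D) = f := by
  ext h
  rw [convApply]
  have : ∀ p : H × H, f p.1 * cunit D p.2 = D.ε p.2 • f p.1 := by
    intro p; rw [cunitApply, mul_smul_comm, mul_one]
  simp only [this]
  exact counitDFr D f h

lemma conv_unit_left (f : H →ₗ[ℂ] H ⊗[ℂ] H) : conv D (cunit D) f = f := by
  ext h
  rw [convApply]
  have : ∀ p : H × H, cunit D p.1 * f p.2 = D.ε p.1 • f p.2 := by
    intro p; rw [cunitApply, smul_mul_assoc, one_mul]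
  simp only [this]
  exact counitDF D f h

lemma conv_assoc (f g k : H →ₗ[ℂ] H ⊗[ℂ] H) :
    conv D (conv D f g) k = conv D f (conv D g k) := by
  ext h
  rw [convApply, convApply]
  have lhs1 : ∀ p : H × H, conv D f g p.1 * k p.2
      = ((LinearMap.mul' ℂ (H ⊗[ℂ] H)) ∘ₗ
          (map ((LinearMap.mul' ℂ (H ⊗[ℂ] H)) ∘ₗ map f g) k)) (D.comul p.1 ⊗ₜ[ℂ] p.2) := by
    intro p
    rw [convApply]
    simp only [LinearMap.comp_apply, map_tmul, LinearMap.mul'_apply]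
    congr 1
    exact keyDmul D f g p.1
  simp only [lhs1]
  rw [MD]
  have rhs1 : ∀ p : H × H,
      ((LinearMap.mul' ℂ (H ⊗[ℂ] H)) ∘ₗ
          (map ((LinearMap.mul' ℂ (H ⊗[ℂ] H)) ∘ₗ map f g) k))
        ((TensorProduct.assoc ℂ H H H).symm (p.1 ⊗ₜ[ℂ] D.comul p.2))
      = f p.1 * conv D g k p.2 := by
    intro p
    rw [convApply]
    have expand : ∀ x : H, ∀ W : H ⊗[ℂ] H,
        ((LinearMap.mul' ℂ (H ⊗[ℂ] H)) ∘ₗ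
            (map ((LinearMap.mul' ℂ (H ⊗[ℂ] H)) ∘ₗ map f g) k))
          ((TensorProduct.assoc ℂ H H H).symm (x ⊗ₜ[ℂ] W))
        = f x * ((LinearMap.mul' ℂ (H ⊗[ℂ] H)) ∘ₗ (map g k)) W := by
      intro x W
      induction W using TensorProduct.induction_on with
      | zero => simp
      | tmul y z => simp [mul_assoc]
      | add u v hu hv => simp [tmul_add, map_add, hu, hv, mul_add]
    rw [expand]
    congr 1
    have := keyDmul D g k p.2
    simpa using this.symm
  simp only [rhs1]

end conv
end HopfAux
namespace HopfAux
open TensorProduct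
set_option synthInstance.maxHeartbeats 1000000
set_option maxHeartbeats 1000000

section antipode
variable {H : Type*} [Ring H] [Algebra ℂ H] (D : HopfData H)
variable {M : Type*} [AddCommMonoid M] [Module ℂ M]

lemma commNat (f g : H →ₗ[ℂ] H) (X : H ⊗[ℂ] H) :
    TensorProduct.comm ℂ H H (map f g X) = map g f (TensorProduct.comm ℂ H H X) := by
  induction X using TensorProduct.induction_on with
  | zero => simp
  | tmul a b => simp
  | add u v hu hv => simp [hu, hv]

lemma commComm (X : H ⊗[ℂ] H) :
    TensorProduct.comm ℂ H H (TensorProduct.comm ℂ H H X) = X := by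
  induction X using TensorProduct.induction_on with
  | zero => simp
  | tmul a b => simp
  | add u v hu hv => simp [hu, hv]

/-- `τ ∘ (S ⊗ S) ∘ Δ`. -/
def Yg : H →ₗ[ℂ] H ⊗[ℂ] H :=
  (TensorProduct.comm ℂ H H).toLinearMap ∘ₗ map D.S D.S ∘ₗ D.comul

/-- `Δ ∘ S`. -/
def Xg : H →ₗ[ℂ] H ⊗[ℂ] H := D.comul ∘ₗ D.S

lemma inv1 : conv D D.comul (Xg D) = cunit D := by
  ext h
  rw [convApply, cunitApply]
  have e : ∀ p : H × H, D.comul p.1 * Xg D p.2 = D.comul (p.1 * D.S p.2) := by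
    intro p; rw [D.comul_mul]; rfl
  simp only [e]
  rw [sumPull D.comul, D.antipode_right, Algebra.algebraMap_eq_smul_one, map_smul,
    D.comul_one, Algebra.TensorProduct.one_def]

lemma inv2 : conv D (Yg D) D.comul = cunit D := by
  ext h
  rw [convApply, cunitApply]
  set Φ : (H ⊗[ℂ] H) ⊗[ℂ] H →ₗ[ℂ] H ⊗[ℂ] H :=
    (LinearMap.mul' ℂ (H ⊗[ℂ] H)) ∘ₗ
      map ((TensorProduct.comm ℂ H H).toLinearMap ∘ₗ map D.S D.S) D.comul with hΦ
  have step1 : ∀ p : H × H, Yg D p.1 * D.comul p.2 = Φ (D.comul p.1 ⊗ₜ[ℂ] p.2) := by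
    intro p; simp [hΦ, Yg]
  simp only [step1]
  rw [MD]
  have step2 : ∀ p : H × H,
      Φ ((TensorProduct.assoc ℂ H H H).symm (p.1 ⊗ₜ[ℂ] D.comul p.2))
        = (1 : H) ⊗ₜ[ℂ] (D.S p.1 * p.2) := by
    intro p
    set Φp : (H ⊗[ℂ] H) ⊗[ℂ] H →ₗ[ℂ] H ⊗[ℂ] H :=
      map ((LinearMap.mul' ℂ H) ∘ₗ map D.S LinearMap.id) (LinearMap.mulLeft ℂ (D.S p.1))
      with hΦp
    have ea : Φ ((TensorProduct.assoc ℂ H H H).symm (p.1 ⊗ₜ[ℂ] D.comul p.2))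
        = ((D.Δ p.2).map fun q => Φ ((p.1 ⊗ₜ[ℂ] q.1) ⊗ₜ[ℂ] q.2)).sum := by
      have := keyD D (Φ ∘ₗ (TensorProduct.assoc ℂ H H H).symm.toLinearMap
          ∘ₗ (TensorProduct.mk ℂ H (H ⊗[ℂ] H) p.1)) p.2
      simp only [LinearMap.comp_apply, LinearEquiv.coe_coe, mk_apply,
        assoc_symm_tmul] at this
      exact this.symm
    have ew : ∀ (x : H) (W : H ⊗[ℂ] H),
        (D.S x ⊗ₜ[ℂ] D.S p.1) * W
          = Φp ((TensorProduct.assoc ℂ H H H).symm (x ⊗ₜ[ℂ] W)) := by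
      intro x W
      induction W using TensorProduct.induction_on with
      | zero => simp
      | tmul y z => simp [hΦp, Algebra.TensorProduct.tmul_mul_tmul]
      | add u v hu hv => simp [tmul_add, mul_add, hu, hv]
    have eb : ∀ q : H × H, Φ ((p.1 ⊗ₜ[ℂ] q.1) ⊗ₜ[ℂ] q.2)
        = Φp ((TensorProduct.assoc ℂ H H H).symm (q.1 ⊗ₜ[ℂ] D.comul q.2)) := by
      intro q
      rw [← ew]
      simp [hΦ]
    have ed : ∀ q : H × H, Φp (D.comul q.1 ⊗ₜ[ℂ] q.2)
        = D.ε q.1 • ((1 : H) ⊗ₜ[ℂ] (D.S p.1 * q.2)) := by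
      intro q
      have hk := keyD D (Φp ∘ₗ ((TensorProduct.mk ℂ (H ⊗[ℂ] H) H).flip q.2)) q.1
      simp only [LinearMap.comp_apply, LinearMap.flip_apply, mk_apply] at hk
      rw [← hk]
      have : ∀ w : H × H, Φp ((w.1 ⊗ₜ[ℂ] w.2) ⊗ₜ[ℂ] q.2)
          = ((TensorProduct.mk ℂ H H).flip (D.S p.1 * q.2)) (D.S w.1 * w.2) := by
        intro w; simp [hΦp]
      simp only [this]
      rw [c1F]
      simp
    rw [ea]
    simp only [eb]
    rw [← MD D Φp p.2]
    simp only [ed]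
    have := counitDF D ((TensorProduct.mk ℂ H H (1 : H)) ∘ₗ (LinearMap.mulLeft ℂ (D.S p.1))) p.2
    simp only [LinearMap.comp_apply, LinearMap.mulLeft_apply, mk_apply] at this
    exact this
  simp only [step2]
  have e5 : ∀ p : H × H, (1 : H) ⊗ₜ[ℂ] (D.S p.1 * p.2)
      = ((TensorProduct.mk ℂ H H) 1) (D.S p.1 * p.2) := fun p => rfl
  simp only [e5]
  rw [c1F, Algebra.TensorProduct.one_def]
  simp

lemma antiS (h : H) :
    D.comul (D.S h) = TensorProduct.comm ℂ H H (map D.S D.S (D.comul h)) := by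
  have key : Yg D = Xg D := by
    calc Yg D = conv D (Yg D) (cunit D) := (conv_unit_right D _).symm
      _ = conv D (Yg D) (conv D D.comul (Xg D)) := by rw [inv1]
      _ = conv D (conv D (Yg D) D.comul) (Xg D) := (conv_assoc D _ _ _).symm
      _ = conv D (cunit D) (Xg D) := by rw [inv2]
      _ = Xg D := conv_unit_left D _
  have := congrArg (fun f : H →ₗ[ℂ] H ⊗[ℂ] H => f h) key
  simpa [Yg, Xg] using this.symm

lemma antiSinv (h : H) :
    D.comul (D.Sinv h) = TensorProduct.comm ℂ H H (map D.Sinv D.Sinv (D.comul h)) := by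
  have h1 := antiS D (D.Sinv h)
  rw [D.S_Sinv] at h1
  rw [h1, commNat, commComm]
  have hid : ∀ Z : H ⊗[ℂ] H, map D.Sinv D.Sinv (map D.S D.S Z) = Z := by
    intro Z
    induction Z using TensorProduct.induction_on with
    | zero => simp
    | tmul a b => simp [D.Sinv_S]
    | add u v hu hv => simp [hu, hv]
  exact (hid _).symm

lemma AD (Φ : H ⊗[ℂ] H →ₗ[ℂ] M) (h : H) :
    ((D.Δ (D.Sinv h)).map fun q => Φ (q.1 ⊗ₜ[ℂ] q.2)).sum
      = ((D.Δ h).map fun p => Φ (D.Sinv p.2 ⊗ₜ[ℂ] D.Sinv p.1)).sum := by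
  rw [keyD, antiSinv]
  have := keyD D (Φ ∘ₗ (TensorProduct.comm ℂ H H).toLinearMap ∘ₗ map D.Sinv D.Sinv) h
  simp only [LinearMap.comp_apply, LinearEquiv.coe_coe, map_tmul, comm_tmul] at this
  exact this.symm

end antipode
end HopfAux
namespace HopfAux
open TensorProduct
set_option synthInstance.maxHeartbeats 1000000
set_option maxHeartbeats 1000000

section d3
variable {H : Type*} [Ring H] [Algebra ℂ H] (D : HopfData H)
variable {M : Type*} [AddCommMonoid M] [Module ℂ M]

lemma sumD3 (F : H × H × H → M) (x : H) :
    ((D.Δ3 x).map fun t => F t).sum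
      = ((D.Δ x).map fun p => ((D.Δ p.1).map fun q => F (q.1, q.2, p.2)).sum).sum := by
  rw [HopfData.Δ3, sum_flat]
  simp only [List.map_map]
  rfl

lemma AD3 (Ψ : H ⊗[ℂ] (H ⊗[ℂ] H) →ₗ[ℂ] M) (g : H) :
    ((D.Δ3 (D.Sinv g)).map fun t => Ψ (t.1 ⊗ₜ[ℂ] (t.2.1 ⊗ₜ[ℂ] t.2.2))).sum
      = ((D.Δ g).map fun p => ((D.Δ p.2).map fun q =>
          Ψ (D.Sinv q.2 ⊗ₜ[ℂ] (D.Sinv q.1 ⊗ₜ[ℂ] D.Sinv p.1))).sum).sum := by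
  set Θ : H ⊗[ℂ] H →ₗ[ℂ] M :=
    Ψ ∘ₗ (TensorProduct.assoc ℂ H H H).toLinearMap ∘ₗ (map D.comul LinearMap.id) with hΘ
  rw [sumD3]
  have stepa : ∀ p : H × H,
      ((D.Δ p.1).map fun q => Ψ (q.1 ⊗ₜ[ℂ] (q.2 ⊗ₜ[ℂ] p.2))).sum = Θ (p.1 ⊗ₜ[ℂ] p.2) := by
    intro p
    have := keyD D (Ψ ∘ₗ (TensorProduct.assoc ℂ H H H).toLinearMap
        ∘ₗ ((TensorProduct.mk ℂ (H ⊗[ℂ] H) H).flip p.2)) p.1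
    simp only [LinearMap.comp_apply, LinearEquiv.coe_coe, LinearMap.flip_apply,
      mk_apply, assoc_tmul] at this
    rw [this, hΘ]
    simp
  simp only [stepa]
  rw [AD]
  have stepc : ∀ p : H × H, Θ (D.Sinv p.2 ⊗ₜ[ℂ] D.Sinv p.1)
      = ((D.Δ p.2).map fun q =>
          Ψ (D.Sinv q.2 ⊗ₜ[ℂ] (D.Sinv q.1 ⊗ₜ[ℂ] D.Sinv p.1))).sum := by
    intro p
    have hAD := AD D (Ψ ∘ₗ (TensorProduct.assoc ℂ H H H).toLinearMap
        ∘ₗ ((TensorProduct.mk ℂ (H ⊗[ℂ] H) H).flip (D.Sinv p.1))) p.2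
    have hkey := keyD D (Ψ ∘ₗ (TensorProduct.assoc ℂ H H H).toLinearMap
        ∘ₗ ((TensorProduct.mk ℂ (H ⊗[ℂ] H) H).flip (D.Sinv p.1))) (D.Sinv p.2)
    have hval : Θ (D.Sinv p.2 ⊗ₜ[ℂ] D.Sinv p.1)
        = (Ψ ∘ₗ (TensorProduct.assoc ℂ H H H).toLinearMap
            ∘ₗ ((TensorProduct.mk ℂ (H ⊗[ℂ] H) H).flip (D.Sinv p.1)))
          (D.comul (D.Sinv p.2)) := by
      simp [hΘ]
    rw [hval, ← hkey, hAD]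
    simp only [LinearMap.comp_apply, LinearEquiv.coe_coe, LinearMap.flip_apply,
      mk_apply, assoc_tmul]
  simp only [stepc]

end d3

section yd
variable {H N : Type*} [Ring H] [Algebra ℂ H] [Ring N] [Algebra ℂ N]
  {D : HopfData H} (Y : YDData H N D)
variable {M : Type*} [AddCommMonoid M] [Module ℂ M]

lemma keyT (Φ : H ⊗[ℂ] N →ₗ[ℂ] M) (m : N) :
    ((Y.θ m).map fun r => Φ (r.1 ⊗ₜ[ℂ] r.2)).sum = Φ (Y.coact m) := by
  rw [sumPull, Y.θ_spec]

lemma MT (Φ : (H ⊗[ℂ] H) ⊗[ℂ] N →ₗ[ℂ] M) (a : N) :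
    ((Y.θ a).map fun r => Φ (D.comul r.1 ⊗ₜ[ℂ] r.2)).sum
      = ((Y.θ a).map fun r =>
          Φ ((TensorProduct.assoc ℂ H H N).symm (r.1 ⊗ₜ[ℂ] Y.coact r.2))).sum := by
  have e1 : ((Y.θ a).map fun r => Φ (D.comul r.1 ⊗ₜ[ℂ] r.2)).sum
      = (Φ ∘ₗ map D.comul LinearMap.id) (Y.coact a) := by
    rw [← keyT Y (Φ ∘ₗ map D.comul LinearMap.id) a]
    simp
  have e2 : ((Y.θ a).map fun r =>
        Φ ((TensorProduct.assoc ℂ H H N).symm (r.1 ⊗ₜ[ℂ] Y.coact r.2))).sum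
      = (Φ ∘ₗ (TensorProduct.assoc ℂ H H N).symm.toLinearMap ∘ₗ map LinearMap.id Y.coact)
          (Y.coact a) := by
    rw [← keyT Y (Φ ∘ₗ (TensorProduct.assoc ℂ H H N).symm.toLinearMap
        ∘ₗ map LinearMap.id Y.coact) a]
    simp
  rw [e1, e2]
  simp only [LinearMap.comp_apply, LinearEquiv.coe_coe, ← Y.coact_coassoc a,
    LinearEquiv.symm_apply_apply]

lemma counitTF (F : N →ₗ[ℂ] M) (m : N) :
    ((Y.θ m).map fun r => D.ε r.1 • F r.2).sum = F m := by
  simp only [← map_smul]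
  rw [sumPull, Y.coact_counit]

/-- `γ` as a linear map. -/
def gL : N →ₗ[ℂ] N := (lift (Y.act.flip ∘ₗ D.Sinv)) ∘ₗ Y.coact

lemma gammaList (m : N) :
    gL Y m = ((Y.θ m).map fun r => Y.act r.2 (D.Sinv r.1)).sum := by
  have := keyT Y (lift (Y.act.flip ∘ₗ D.Sinv)) m
  simp only [lift.tmul, LinearMap.comp_apply, LinearMap.flip_apply] at this
  rw [gL]
  exact this.symm

lemma gammaEq (m : N) : Y.gamma m = gL Y m := by
  rw [gammaList]; rfl

end yd
end HopfAux
namespace HopfAux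
open TensorProduct
set_option synthInstance.maxHeartbeats 1000000
set_option maxHeartbeats 1000000

section gadgets
variable {H : Type*} [Ring H] [Algebra ℂ H] (D : HopfData H)

/-- reversal-with-`S⁻¹` on a triple tensor. -/
def ξ : H ⊗[ℂ] (H ⊗[ℂ] H) →ₗ[ℂ] H ⊗[ℂ] (H ⊗[ℂ] H) :=
  (map D.Sinv (map D.Sinv D.Sinv))
    ∘ₗ (map LinearMap.id (TensorProduct.comm ℂ H H).toLinearMap)
    ∘ₗ (TensorProduct.comm ℂ (H ⊗[ℂ] H) H).toLinearMap
    ∘ₗ (TensorProduct.assoc ℂ H H H).symm.toLinearMap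

lemma ξeval (a b c : H) :
    ξ D (a ⊗ₜ[ℂ] (b ⊗ₜ[ℂ] c))
      = D.Sinv c ⊗ₜ[ℂ] (D.Sinv b ⊗ₜ[ℂ] D.Sinv a) := by
  simp [ξ]

/-- multiplication of a triple tensor. -/
def m3 : H ⊗[ℂ] (H ⊗[ℂ] H) →ₗ[ℂ] H :=
  (LinearMap.mul' ℂ H) ∘ₗ map LinearMap.id (LinearMap.mul' ℂ H)

lemma m3eval (a b c : H) : m3 (a ⊗ₜ[ℂ] (b ⊗ₜ[ℂ] c)) = a * (b * c) := by
  simp [m3]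

/-- cyclic permutation of a triple tensor. -/
def σ3 : (H ⊗[ℂ] H) ⊗[ℂ] H →ₗ[ℂ] H ⊗[ℂ] (H ⊗[ℂ] H) :=
  (TensorProduct.assoc ℂ H H H).toLinearMap
    ∘ₗ (TensorProduct.comm ℂ H (H ⊗[ℂ] H)).toLinearMap
    ∘ₗ (TensorProduct.assoc ℂ H H H).toLinearMap

lemma σ3eval (a b c : H) :
    σ3 ((a ⊗ₜ[ℂ] b) ⊗ₜ[ℂ] c) = b ⊗ₜ[ℂ] (c ⊗ₜ[ℂ] a) := by
  simp [σ3]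

end gadgets

section omega
variable {H N : Type*} [Ring H] [Algebra ℂ H] [Ring N] [Algebra ℂ N]
  {D : HopfData H} (Y : YDData H N D)

/-- The 5-linear gadget used to process the Yetter–Drinfeld condition. -/
def Ω : (H ⊗[ℂ] (H ⊗[ℂ] H)) ⊗[ℂ] (H ⊗[ℂ] N) →ₗ[ℂ] H ⊗[ℂ] N :=
  (map (m3 ∘ₗ (map D.Sinv LinearMap.id)) (lift Y.act))
    ∘ₗ (map σ3 (TensorProduct.comm ℂ H N).toLinearMap)
    ∘ₗ (TensorProduct.tensorTensorTensorComm ℂ (H ⊗[ℂ] H) H H N).toLinearMap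
    ∘ₗ (map ((TensorProduct.assoc ℂ H H H).symm.toLinearMap
          ∘ₗ (map LinearMap.id (TensorProduct.comm ℂ H H).toLinearMap)) LinearMap.id)

lemma Ωeval (x y z : H) (u : H) (v : N) :
    Ω Y ((x ⊗ₜ[ℂ] (y ⊗ₜ[ℂ] z)) ⊗ₜ[ℂ] (u ⊗ₜ[ℂ] v))
      = (D.Sinv z * (u * x)) ⊗ₜ[ℂ] Y.act v y := by
  simp [Ω, m3, σ3]

end omega
end HopfAux
namespace HopfAux
open TensorProduct
set_option synthInstance.maxHeartbeats 1000000
set_option maxHeartbeats 1000000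

section util2
variable {α : Type*} {M : Type*} [AddCommMonoid M] [Module ℂ M]

lemma sum_flat' (l : List α) (g : α → List M) :
    (l.flatMap g).sum = (l.map fun a => (g a).sum).sum := by
  induction l with
  | nil => rfl
  | cons a t ih => simp only [List.flatMap_cons, List.sum_append, ih,
      List.map_cons, List.sum_cons]

lemma smul_sum_list (l : List α) (c : ℂ) (f : α → M) :
    (l.map fun a => c • f a).sum = c • (l.map f).sum := by
  induction l with
  | nil => simp
  | cons a t ih => simp [ih, smul_add]

end util2

section lemB
variable {H N : Type*} [Ring H] [Algebra ℂ H] [Ring N] [Algebra ℂ N]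
  {D : HopfData H} (Y : YDData H N D)

lemma coactGamma (a : N) :
    Y.coact (gL Y a)
      = ((Y.θ a).map fun r => (D.Sinv (D.Sinv r.1)) ⊗ₜ[ℂ] gL Y r.2).sum := by
  -- generic double expansion
  have expand2 : ∀ (x : H) (T : H ⊗[ℂ] N),
      Ω Y ((ξ D ((map LinearMap.id D.comul) (D.comul x))) ⊗ₜ[ℂ] T)
        = ((D.Δ x).map fun p => ((D.Δ p.2).map fun q =>
            Ω Y ((D.Sinv q.2 ⊗ₜ[ℂ] (D.Sinv q.1 ⊗ₜ[ℂ] D.Sinv p.1)) ⊗ₜ[ℂ] T)).sum).sum := by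
    intro x T
    have inner : ∀ p : H × H,
        Ω Y ((ξ D (p.1 ⊗ₜ[ℂ] D.comul p.2)) ⊗ₜ[ℂ] T)
          = ((D.Δ p.2).map fun q =>
              Ω Y ((D.Sinv q.2 ⊗ₜ[ℂ] (D.Sinv q.1 ⊗ₜ[ℂ] D.Sinv p.1)) ⊗ₜ[ℂ] T)).sum := by
      intro p
      have h2 := keyD D (Ω Y ∘ₗ ((TensorProduct.mk ℂ (H ⊗[ℂ] (H ⊗[ℂ] H)) (H ⊗[ℂ] N)).flip T)
          ∘ₗ ξ D ∘ₗ (TensorProduct.mk ℂ H (H ⊗[ℂ] H) p.1)) p.2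
      simp only [LinearMap.comp_apply, LinearMap.flip_apply, mk_apply, ξeval] at h2
      exact h2.symm
    have h1 := keyD D (Ω Y ∘ₗ ((TensorProduct.mk ℂ (H ⊗[ℂ] (H ⊗[ℂ] H)) (H ⊗[ℂ] N)).flip T)
        ∘ₗ ξ D ∘ₗ (map LinearMap.id D.comul)) x
    simp only [LinearMap.comp_apply, LinearMap.flip_apply, mk_apply, map_tmul,
      LinearMap.id_coe, id_eq] at h1
    rw [← h1]
    simp only [inner]
  -- Φ₁
  set Φ₁ : (H ⊗[ℂ] H) ⊗[ℂ] N →ₗ[ℂ] H ⊗[ℂ] N :=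
    Ω Y ∘ₗ (map (ξ D ∘ₗ (map LinearMap.id D.comul) ∘ₗ D.comul) LinearMap.id)
      ∘ₗ (TensorProduct.assoc ℂ H H N).toLinearMap with hΦ₁
  have step0 : Y.coact (gL Y a)
      = ((Y.θ a).map fun r => Y.coact (Y.act r.2 (D.Sinv r.1))).sum := by
    rw [gammaList, ← sumPull Y.coact]
  rw [step0]
  have step1 : ∀ r : H × N, Y.coact (Y.act r.2 (D.Sinv r.1))
      = ((D.Δ3 (D.Sinv r.1)).map fun t =>
          Ω Y ((t.1 ⊗ₜ[ℂ] (t.2.1 ⊗ₜ[ℂ] t.2.2)) ⊗ₜ[ℂ] Y.coact r.2)).sum := by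
    intro r
    rw [Y.yd, sum_flat']
    congr 1
    apply List.map_congr_left
    intro t _
    have := keyT Y (Ω Y ∘ₗ (TensorProduct.mk ℂ (H ⊗[ℂ] (H ⊗[ℂ] H)) (H ⊗[ℂ] N)
        (t.1 ⊗ₜ[ℂ] (t.2.1 ⊗ₜ[ℂ] t.2.2)))) r.2
    simp only [LinearMap.comp_apply, mk_apply, Ωeval] at this
    rw [← this]
    simp only [mul_assoc]
  simp only [step1]
  have step3 : ∀ r : H × N,
      ((D.Δ3 (D.Sinv r.1)).map fun t =>
          Ω Y ((t.1 ⊗ₜ[ℂ] (t.2.1 ⊗ₜ[ℂ] t.2.2)) ⊗ₜ[ℂ] Y.coact r.2)).sum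
        = Φ₁ ((TensorProduct.assoc ℂ H H N).symm (r.1 ⊗ₜ[ℂ] Y.coact r.2)) := by
    intro r
    have h3 := AD3 D (Ω Y ∘ₗ ((TensorProduct.mk ℂ (H ⊗[ℂ] (H ⊗[ℂ] H)) (H ⊗[ℂ] N)).flip
        (Y.coact r.2))) r.1
    simp only [LinearMap.comp_apply, LinearMap.flip_apply, mk_apply] at h3
    rw [h3]
    have h4 : Φ₁ ((TensorProduct.assoc ℂ H H N).symm (r.1 ⊗ₜ[ℂ] Y.coact r.2))
        = Ω Y ((ξ D ((map LinearMap.id D.comul) (D.comul r.1))) ⊗ₜ[ℂ] Y.coact r.2) := by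
      rw [hΦ₁]
      simp only [LinearMap.comp_apply, LinearEquiv.coe_coe,
        LinearEquiv.apply_symm_apply, map_tmul, LinearMap.id_coe, id_eq]
    rw [h4, expand2]
  simp only [step3]
  rw [← MT Y Φ₁ a]
  -- expand Φ₁ (comul r₁ ⊗ r₂)
  have step6 : ∀ r : H × N, Φ₁ (D.comul r.1 ⊗ₜ[ℂ] r.2)
      = ((D.Δ r.1).map fun w => ((D.Δ w.1).map fun p => ((D.Δ p.2).map fun q =>
          Ω Y ((D.Sinv q.2 ⊗ₜ[ℂ] (D.Sinv q.1 ⊗ₜ[ℂ] D.Sinv p.1))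
            ⊗ₜ[ℂ] (w.2 ⊗ₜ[ℂ] r.2))).sum).sum).sum := by
    intro r
    have h5 := keyD D (Φ₁ ∘ₗ ((TensorProduct.mk ℂ (H ⊗[ℂ] H) N).flip r.2)) r.1
    simp only [LinearMap.comp_apply, LinearMap.flip_apply, mk_apply] at h5
    rw [← h5]
    congr 1
    apply List.map_congr_left
    intro w _
    have h6 : Φ₁ ((w.1 ⊗ₜ[ℂ] w.2) ⊗ₜ[ℂ] r.2)
        = Ω Y ((ξ D ((map LinearMap.id D.comul) (D.comul w.1))) ⊗ₜ[ℂ] (w.2 ⊗ₜ[ℂ] r.2)) := by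
      rw [hΦ₁]
      simp only [LinearMap.comp_apply, LinearEquiv.coe_coe, assoc_tmul, map_tmul,
        LinearMap.id_coe, id_eq]
    rw [h6, expand2]
  simp only [step6]
  -- move m1 : per (r, w)
  have step7 : ∀ (r : H × N) (w : H × H),
      ((D.Δ w.1).map fun p => ((D.Δ p.2).map fun q =>
          Ω Y ((D.Sinv q.2 ⊗ₜ[ℂ] (D.Sinv q.1 ⊗ₜ[ℂ] D.Sinv p.1))
            ⊗ₜ[ℂ] (w.2 ⊗ₜ[ℂ] r.2))).sum).sum
        = ((D.Δ w.1).map fun p => ((D.Δ p.1).map fun q =>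
          Ω Y ((D.Sinv p.2 ⊗ₜ[ℂ] (D.Sinv q.2 ⊗ₜ[ℂ] D.Sinv q.1))
            ⊗ₜ[ℂ] (w.2 ⊗ₜ[ℂ] r.2))).sum).sum := by
    intro r w
    set Φm1 : (H ⊗[ℂ] H) ⊗[ℂ] H →ₗ[ℂ] H ⊗[ℂ] N :=
      Ω Y ∘ₗ ((TensorProduct.mk ℂ (H ⊗[ℂ] (H ⊗[ℂ] H)) (H ⊗[ℂ] N)).flip (w.2 ⊗ₜ[ℂ] r.2))
        ∘ₗ ξ D ∘ₗ (TensorProduct.assoc ℂ H H H).toLinearMap with hΦm1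
    have lhs1 : ∀ p : H × H, Φm1 ((TensorProduct.assoc ℂ H H H).symm (p.1 ⊗ₜ[ℂ] D.comul p.2))
        = ((D.Δ p.2).map fun q =>
            Ω Y ((D.Sinv q.2 ⊗ₜ[ℂ] (D.Sinv q.1 ⊗ₜ[ℂ] D.Sinv p.1))
              ⊗ₜ[ℂ] (w.2 ⊗ₜ[ℂ] r.2))).sum := by
      intro p
      have hk := keyD D (Φm1 ∘ₗ (TensorProduct.assoc ℂ H H H).symm.toLinearMap
          ∘ₗ (TensorProduct.mk ℂ H (H ⊗[ℂ] H) p.1)) p.2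
      simp only [LinearMap.comp_apply, LinearEquiv.coe_coe, mk_apply, assoc_symm_tmul] at hk
      rw [← hk]
      simp only [hΦm1, LinearMap.comp_apply, LinearEquiv.coe_coe, assoc_tmul, ξeval,
        LinearMap.flip_apply, mk_apply]
    have rhs1 : ∀ p : H × H, Φm1 (D.comul p.1 ⊗ₜ[ℂ] p.2)
        = ((D.Δ p.1).map fun q =>
            Ω Y ((D.Sinv p.2 ⊗ₜ[ℂ] (D.Sinv q.2 ⊗ₜ[ℂ] D.Sinv q.1))
              ⊗ₜ[ℂ] (w.2 ⊗ₜ[ℂ] r.2))).sum := by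
      intro p
      have hk := keyD D (Φm1 ∘ₗ ((TensorProduct.mk ℂ (H ⊗[ℂ] H) H).flip p.2)) p.1
      simp only [LinearMap.comp_apply, LinearMap.flip_apply, mk_apply] at hk
      rw [← hk]
      simp only [hΦm1, LinearMap.comp_apply, LinearEquiv.coe_coe, assoc_tmul, ξeval,
        LinearMap.flip_apply, mk_apply]
    calc ((D.Δ w.1).map fun p => ((D.Δ p.2).map fun q =>
            Ω Y ((D.Sinv q.2 ⊗ₜ[ℂ] (D.Sinv q.1 ⊗ₜ[ℂ] D.Sinv p.1))
              ⊗ₜ[ℂ] (w.2 ⊗ₜ[ℂ] r.2))).sum).sum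
        = ((D.Δ w.1).map fun p =>
            Φm1 ((TensorProduct.assoc ℂ H H H).symm (p.1 ⊗ₜ[ℂ] D.comul p.2))).sum := by
          simp only [lhs1]
      _ = ((D.Δ w.1).map fun p => Φm1 (D.comul p.1 ⊗ₜ[ℂ] p.2)).sum := (MD D Φm1 w.1).symm
      _ = _ := by simp only [rhs1]
  simp only [step7]
  -- move m2 : per r
  have step8 : ∀ r : H × N,
      ((D.Δ r.1).map fun w => ((D.Δ w.1).map fun p => ((D.Δ p.1).map fun q =>
          Ω Y ((D.Sinv p.2 ⊗ₜ[ℂ] (D.Sinv q.2 ⊗ₜ[ℂ] D.Sinv q.1))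
            ⊗ₜ[ℂ] (w.2 ⊗ₜ[ℂ] r.2))).sum).sum).sum
        = ((D.Δ r.1).map fun w => ((D.Δ w.2).map fun e => ((D.Δ w.1).map fun q =>
          Ω Y ((D.Sinv e.1 ⊗ₜ[ℂ] (D.Sinv q.2 ⊗ₜ[ℂ] D.Sinv q.1))
            ⊗ₜ[ℂ] (e.2 ⊗ₜ[ℂ] r.2))).sum).sum).sum := by
    intro r
    set Φm2 : (H ⊗[ℂ] H) ⊗[ℂ] H →ₗ[ℂ] H ⊗[ℂ] N :=
      Ω Y ∘ₗ map (ξ D ∘ₗ (TensorProduct.assoc ℂ H H H).toLinearMap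
          ∘ₗ (map D.comul LinearMap.id)) ((TensorProduct.mk ℂ H N).flip r.2) with hΦm2
    have lhs2 : ∀ w : H × H, Φm2 (D.comul w.1 ⊗ₜ[ℂ] w.2)
        = ((D.Δ w.1).map fun p => ((D.Δ p.1).map fun q =>
            Ω Y ((D.Sinv p.2 ⊗ₜ[ℂ] (D.Sinv q.2 ⊗ₜ[ℂ] D.Sinv q.1))
              ⊗ₜ[ℂ] (w.2 ⊗ₜ[ℂ] r.2))).sum).sum := by
      intro w
      have hk := keyD D (Φm2 ∘ₗ ((TensorProduct.mk ℂ (H ⊗[ℂ] H) H).flip w.2)) w.1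
      simp only [LinearMap.comp_apply, LinearMap.flip_apply, mk_apply] at hk
      rw [← hk]
      congr 1
      apply List.map_congr_left
      intro p _
      have : Φm2 ((p.1 ⊗ₜ[ℂ] p.2) ⊗ₜ[ℂ] w.2)
          = Ω Y ((ξ D ((TensorProduct.assoc ℂ H H H) ((D.comul p.1) ⊗ₜ[ℂ] p.2)))
              ⊗ₜ[ℂ] (w.2 ⊗ₜ[ℂ] r.2)) := by
        rw [hΦm2]
        simp only [LinearMap.comp_apply, LinearEquiv.coe_coe, map_tmul,
          LinearMap.id_coe, id_eq, LinearMap.flip_apply, mk_apply]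
      rw [this]
      have hk2 := keyD D (Ω Y ∘ₗ ((TensorProduct.mk ℂ (H ⊗[ℂ] (H ⊗[ℂ] H)) (H ⊗[ℂ] N)).flip
          (w.2 ⊗ₜ[ℂ] r.2)) ∘ₗ ξ D ∘ₗ (TensorProduct.assoc ℂ H H H).toLinearMap
          ∘ₗ ((TensorProduct.mk ℂ (H ⊗[ℂ] H) H).flip p.2)) p.1
      simp only [LinearMap.comp_apply, LinearEquiv.coe_coe, LinearMap.flip_apply,
        mk_apply, assoc_tmul, ξeval] at hk2
      rw [← hk2]
    have rhs2 : ∀ w : H × H,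
        Φm2 ((TensorProduct.assoc ℂ H H H).symm (w.1 ⊗ₜ[ℂ] D.comul w.2))
        = ((D.Δ w.2).map fun e => ((D.Δ w.1).map fun q =>
            Ω Y ((D.Sinv e.1 ⊗ₜ[ℂ] (D.Sinv q.2 ⊗ₜ[ℂ] D.Sinv q.1))
              ⊗ₜ[ℂ] (e.2 ⊗ₜ[ℂ] r.2))).sum).sum := by
      intro w
      have hk := keyD D (Φm2 ∘ₗ (TensorProduct.assoc ℂ H H H).symm.toLinearMap
          ∘ₗ (TensorProduct.mk ℂ H (H ⊗[ℂ] H) w.1)) w.2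
      simp only [LinearMap.comp_apply, LinearEquiv.coe_coe, mk_apply, assoc_symm_tmul] at hk
      rw [← hk]
      congr 1
      apply List.map_congr_left
      intro e _
      have : Φm2 ((w.1 ⊗ₜ[ℂ] e.1) ⊗ₜ[ℂ] e.2)
          = Ω Y ((ξ D ((TensorProduct.assoc ℂ H H H) ((D.comul w.1) ⊗ₜ[ℂ] e.1)))
              ⊗ₜ[ℂ] (e.2 ⊗ₜ[ℂ] r.2)) := by
        rw [hΦm2]
        simp only [LinearMap.comp_apply, LinearEquiv.coe_coe, map_tmul,
          LinearMap.id_coe, id_eq, LinearMap.flip_apply, mk_apply]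
      rw [this]
      have hk2 := keyD D (Ω Y ∘ₗ ((TensorProduct.mk ℂ (H ⊗[ℂ] (H ⊗[ℂ] H)) (H ⊗[ℂ] N)).flip
          (e.2 ⊗ₜ[ℂ] r.2)) ∘ₗ ξ D ∘ₗ (TensorProduct.assoc ℂ H H H).toLinearMap
          ∘ₗ ((TensorProduct.mk ℂ (H ⊗[ℂ] H) H).flip e.1)) w.1
      simp only [LinearMap.comp_apply, LinearEquiv.coe_coe, LinearMap.flip_apply,
        mk_apply, assoc_tmul, ξeval] at hk2
      rw [← hk2]
    calc ((D.Δ r.1).map fun w => ((D.Δ w.1).map fun p => ((D.Δ p.1).map fun q =>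
            Ω Y ((D.Sinv p.2 ⊗ₜ[ℂ] (D.Sinv q.2 ⊗ₜ[ℂ] D.Sinv q.1))
              ⊗ₜ[ℂ] (w.2 ⊗ₜ[ℂ] r.2))).sum).sum).sum
        = ((D.Δ r.1).map fun w => Φm2 (D.comul w.1 ⊗ₜ[ℂ] w.2)).sum := by
          simp only [lhs2]
      _ = ((D.Δ r.1).map fun w =>
            Φm2 ((TensorProduct.assoc ℂ H H H).symm (w.1 ⊗ₜ[ℂ] D.comul w.2))).sum :=
          MD D Φm2 r.1
      _ = _ := by simp only [rhs2]
  simp only [step8]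
  -- evaluate Ω on pure tensors, swap, collapse, counit
  have step9 : ∀ r : H × N, ∀ w : H × H,
      ((D.Δ w.2).map fun e => ((D.Δ w.1).map fun q =>
          Ω Y ((D.Sinv e.1 ⊗ₜ[ℂ] (D.Sinv q.2 ⊗ₜ[ℂ] D.Sinv q.1))
            ⊗ₜ[ℂ] (e.2 ⊗ₜ[ℂ] r.2))).sum).sum
        = D.ε w.2 • ((D.Δ w.1).map fun q =>
            (D.Sinv (D.Sinv q.1)) ⊗ₜ[ℂ] Y.act r.2 (D.Sinv q.2)).sum := by
    intro r w
    rw [sum_swap]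
    have inner : ∀ q : H × H,
        ((D.Δ w.2).map fun e =>
            Ω Y ((D.Sinv e.1 ⊗ₜ[ℂ] (D.Sinv q.2 ⊗ₜ[ℂ] D.Sinv q.1))
              ⊗ₜ[ℂ] (e.2 ⊗ₜ[ℂ] r.2))).sum
          = D.ε w.2 • ((D.Sinv (D.Sinv q.1)) ⊗ₜ[ℂ] Y.act r.2 (D.Sinv q.2)) := by
      intro q
      have e1 : ∀ e : H × H,
          Ω Y ((D.Sinv e.1 ⊗ₜ[ℂ] (D.Sinv q.2 ⊗ₜ[ℂ] D.Sinv q.1))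
              ⊗ₜ[ℂ] (e.2 ⊗ₜ[ℂ] r.2))
            = (((TensorProduct.mk ℂ H N).flip (Y.act r.2 (D.Sinv q.2)))
                ∘ₗ (LinearMap.mulLeft ℂ (D.Sinv (D.Sinv q.1))))
              (e.2 * D.Sinv e.1) := by
        intro e
        simp only [Ωeval, LinearMap.comp_apply, LinearMap.mulLeft_apply,
          LinearMap.flip_apply, mk_apply]
      simp only [e1]
      rw [c4F]
      simp
    simp only [inner]
    rw [smul_sum_list]
  simp only [step9]
  -- counit on w, then final MT back
  have step10 : ∀ r : H × N,
      ((D.Δ r.1).map fun w => D.ε w.2 • ((D.Δ w.1).map fun q =>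
          (D.Sinv (D.Sinv q.1)) ⊗ₜ[ℂ] Y.act r.2 (D.Sinv q.2)).sum).sum
        = ((D.Δ r.1).map fun q =>
            (D.Sinv (D.Sinv q.1)) ⊗ₜ[ℂ] Y.act r.2 (D.Sinv q.2)).sum := by
    intro r
    set G : H →ₗ[ℂ] H ⊗[ℂ] N :=
      (map (D.Sinv ∘ₗ D.Sinv) ((Y.act r.2) ∘ₗ D.Sinv)) ∘ₗ D.comul with hG
    have hGq : ∀ x : H, G x = ((D.Δ x).map fun q =>
        (D.Sinv (D.Sinv q.1)) ⊗ₜ[ℂ] Y.act r.2 (D.Sinv q.2)).sum := by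
      intro x
      have := keyD D (map (D.Sinv ∘ₗ D.Sinv) ((Y.act r.2) ∘ₗ D.Sinv)) x
      simp only [map_tmul, LinearMap.comp_apply] at this
      rw [hG]
      simp only [LinearMap.comp_apply]
      exact this.symm
    simp only [← hGq]
    exact counitDFr D G r.1
  simp only [step10]
  -- final : MT back to coaction form
  set Φf : (H ⊗[ℂ] H) ⊗[ℂ] N →ₗ[ℂ] H ⊗[ℂ] N :=
    (map (D.Sinv ∘ₗ D.Sinv) (lift (Y.act.flip ∘ₗ D.Sinv)))
      ∘ₗ (TensorProduct.assoc ℂ H H N).toLinearMap with hΦf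
  have step11 : ∀ r : H × N,
      ((D.Δ r.1).map fun q =>
          (D.Sinv (D.Sinv q.1)) ⊗ₜ[ℂ] Y.act r.2 (D.Sinv q.2)).sum
        = Φf (D.comul r.1 ⊗ₜ[ℂ] r.2) := by
    intro r
    have hk := keyD D (Φf ∘ₗ ((TensorProduct.mk ℂ (H ⊗[ℂ] H) N).flip r.2)) r.1
    simp only [LinearMap.comp_apply, LinearMap.flip_apply, mk_apply] at hk
    rw [← hk]
    simp only [hΦf, LinearMap.comp_apply, LinearEquiv.coe_coe, assoc_tmul, map_tmul,
      lift.tmul, LinearMap.flip_apply]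
  simp only [step11]
  rw [MT Y Φf a]
  have step12 : ∀ r : H × N,
      Φf ((TensorProduct.assoc ℂ H H N).symm (r.1 ⊗ₜ[ℂ] Y.coact r.2))
        = (D.Sinv (D.Sinv r.1)) ⊗ₜ[ℂ] gL Y r.2 := by
    intro r
    have hk := keyT Y (Φf ∘ₗ (TensorProduct.assoc ℂ H H N).symm.toLinearMap
        ∘ₗ (TensorProduct.mk ℂ H (H ⊗[ℂ] N) r.1)) r.2
    simp only [LinearMap.comp_apply, LinearEquiv.coe_coe, mk_apply, assoc_symm_tmul] at hk
    rw [← hk]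
    have e2 : ∀ s : H × N, Φf ((r.1 ⊗ₜ[ℂ] s.1) ⊗ₜ[ℂ] s.2)
        = ((TensorProduct.mk ℂ H N) (D.Sinv (D.Sinv r.1))) (Y.act s.2 (D.Sinv s.1)) := by
      intro s
      rw [hΦf]
      simp only [LinearMap.comp_apply, LinearEquiv.coe_coe, assoc_tmul, map_tmul,
        lift.tmul, LinearMap.flip_apply, mk_apply]
    simp only [e2]
    rw [sumPull, ← gammaList]
    simp
  simp only [step12]

end lemB
end HopfAux
namespace HopfAux
open TensorProduct
set_option synthInstance.maxHeartbeats 1000000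
set_option maxHeartbeats 1000000

section lemE
variable {H N : Type*} [Ring H] [Algebra ℂ H] [Ring N] [Algebra ℂ N]
  {D : HopfData H} (Y : YDData H N D)
variable {M : Type*} [AddCommMonoid M] [Module ℂ M]

lemma gammaCoactF (Φ : H ⊗[ℂ] N →ₗ[ℂ] M) (a : N) :
    ((Y.θ (gL Y a)).map fun s => Φ (s.1 ⊗ₜ[ℂ] s.2)).sum
      = ((Y.θ a).map fun r => Φ ((D.Sinv (D.Sinv r.1)) ⊗ₜ[ℂ] gL Y r.2)).sum := by
  rw [keyT, coactGamma, ← sumPull Φ]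

lemma lemE (b c : N) :
    ((Y.θ b).map fun p => gL Y p.2 * Y.act c (D.Sinv p.1)).sum = c * gL Y b := by
  -- braided commutativity + coactGamma
  have F1 : ∀ p : H × N, gL Y p.2 * Y.act c (D.Sinv p.1)
      = ((Y.θ p.2).map fun r =>
          Y.act c (D.Sinv (D.Sinv r.1 * p.1)) * gL Y r.2).sum := by
    intro p
    rw [Y.bc (gL Y p.2) (Y.act c (D.Sinv p.1))]
    have := gammaCoactF Y ((LinearMap.mul' ℂ N)
        ∘ₗ map (Y.act (Y.act c (D.Sinv p.1))) LinearMap.id) p.2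
    simp only [LinearMap.comp_apply, map_tmul, LinearMap.mul'_apply,
      LinearMap.id_coe, id_eq] at this
    rw [this]
    congr 1
    apply List.map_congr_left
    intro r _
    rw [← Y.act_mulH, Sinv_antimul]
  simp only [F1]
  -- MT back to comultiplication form
  set Θ : (H ⊗[ℂ] H) ⊗[ℂ] N →ₗ[ℂ] N :=
    (LinearMap.mul' ℂ N) ∘ₗ (map (Y.act c ∘ₗ D.Sinv ∘ₗ (LinearMap.mul' ℂ H)
        ∘ₗ (map D.Sinv LinearMap.id) ∘ₗ (TensorProduct.comm ℂ H H).toLinearMap) (gL Y))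
      with hΘ
  have F3 : ∀ p : H × N,
      ((Y.θ p.2).map fun r => Y.act c (D.Sinv (D.Sinv r.1 * p.1)) * gL Y r.2).sum
        = Θ ((TensorProduct.assoc ℂ H H N).symm (p.1 ⊗ₜ[ℂ] Y.coact p.2)) := by
    intro p
    have hk := keyT Y (Θ ∘ₗ (TensorProduct.assoc ℂ H H N).symm.toLinearMap
        ∘ₗ (TensorProduct.mk ℂ H (H ⊗[ℂ] N) p.1)) p.2
    simp only [LinearMap.comp_apply, LinearEquiv.coe_coe, mk_apply, assoc_symm_tmul] at hk
    rw [← hk]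
    simp only [hΘ, LinearMap.comp_apply, LinearEquiv.coe_coe, map_tmul, comm_tmul,
      LinearMap.mul'_apply, LinearMap.id_coe, id_eq]
  simp only [F3]
  rw [← MT Y Θ b]
  have F4 : ∀ p : H × N, Θ (D.comul p.1 ⊗ₜ[ℂ] p.2) = D.ε p.1 • (c * gL Y p.2) := by
    intro p
    have hk := keyD D (Θ ∘ₗ ((TensorProduct.mk ℂ (H ⊗[ℂ] H) N).flip p.2)) p.1
    simp only [LinearMap.comp_apply, LinearMap.flip_apply, mk_apply] at hk
    rw [← hk]
    have e1 : ∀ v : H × H, Θ ((v.1 ⊗ₜ[ℂ] v.2) ⊗ₜ[ℂ] p.2)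
        = ((LinearMap.mulRight ℂ (gL Y p.2)) ∘ₗ (Y.act c) ∘ₗ D.Sinv)
            (D.Sinv v.2 * v.1) := by
      intro v
      simp only [hΘ, LinearMap.comp_apply, LinearEquiv.coe_coe, map_tmul, comm_tmul,
        LinearMap.mul'_apply, LinearMap.mulRight_apply, LinearMap.id_coe, id_eq]
    simp only [e1]
    rw [c3F]
    simp only [LinearMap.comp_apply, LinearMap.mulRight_apply, Sinv_one, Y.act_one]
  simp only [F4]
  have := counitTF Y ((LinearMap.mulLeft ℂ c) ∘ₗ gL Y) b
  simp only [LinearMap.comp_apply, LinearMap.mulLeft_apply] at this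
  exact this

lemma lemE2 (b c : N) :
    ((Y.θ b).map fun q => Y.act (q.2 * c) (D.Sinv q.1)).sum = c * gL Y b := by
  have G6 : ∀ q : H × N, Y.act (q.2 * c) (D.Sinv q.1)
      = ((D.Δ q.1).map fun v =>
          Y.act q.2 (D.Sinv v.2) * Y.act c (D.Sinv v.1)).sum := by
    intro q
    rw [Y.act_alg]
    have := AD D ((LinearMap.mul' ℂ N) ∘ₗ map (Y.act q.2) (Y.act c)) q.1
    simp only [LinearMap.comp_apply, map_tmul, LinearMap.mul'_apply] at this
    exact this
  simp only [G6]
  set Θ' : (H ⊗[ℂ] H) ⊗[ℂ] N →ₗ[ℂ] N :=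
    (LinearMap.mul' ℂ N) ∘ₗ (map (lift (Y.act.flip ∘ₗ D.Sinv)) (Y.act c ∘ₗ D.Sinv))
      ∘ₗ (TensorProduct.comm ℂ H (H ⊗[ℂ] N)).toLinearMap
      ∘ₗ (TensorProduct.assoc ℂ H H N).toLinearMap with hΘ'
  have G7 : ∀ q : H × N,
      ((D.Δ q.1).map fun v => Y.act q.2 (D.Sinv v.2) * Y.act c (D.Sinv v.1)).sum
        = Θ' (D.comul q.1 ⊗ₜ[ℂ] q.2) := by
    intro q
    have hk := keyD D (Θ' ∘ₗ ((TensorProduct.mk ℂ (H ⊗[ℂ] H) N).flip q.2)) q.1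
    simp only [LinearMap.comp_apply, LinearMap.flip_apply, mk_apply] at hk
    rw [← hk]
    simp only [hΘ', LinearMap.comp_apply, LinearEquiv.coe_coe, assoc_tmul, comm_tmul,
      map_tmul, lift.tmul, LinearMap.flip_apply, LinearMap.mul'_apply]
  simp only [G7]
  rw [MT Y Θ' b]
  have G8 : ∀ q : H × N,
      Θ' ((TensorProduct.assoc ℂ H H N).symm (q.1 ⊗ₜ[ℂ] Y.coact q.2))
        = gL Y q.2 * Y.act c (D.Sinv q.1) := by
    intro q
    have hk := keyT Y (Θ' ∘ₗ (TensorProduct.assoc ℂ H H N).symm.toLinearMap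
        ∘ₗ (TensorProduct.mk ℂ H (H ⊗[ℂ] N) q.1)) q.2
    simp only [LinearMap.comp_apply, LinearEquiv.coe_coe, mk_apply, assoc_symm_tmul] at hk
    rw [← hk]
    have e1 : ∀ r : H × N, Θ' ((q.1 ⊗ₜ[ℂ] r.1) ⊗ₜ[ℂ] r.2)
        = ((LinearMap.mulRight ℂ (Y.act c (D.Sinv q.1))))
            (Y.act r.2 (D.Sinv r.1)) := by
      intro r
      simp only [hΘ', LinearMap.comp_apply, LinearEquiv.coe_coe, assoc_tmul, comm_tmul,
        map_tmul, lift.tmul, LinearMap.flip_apply, LinearMap.mul'_apply,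
        LinearMap.mulRight_apply]
    simp only [e1]
    rw [sumPull, ← gammaList]
    simp
  simp only [G8]
  exact lemE Y b c

end lemE
end HopfAux
open HopfAux TensorProduct in
/-- the canonical map `γ(m) = m₍₀₎ ◁ S⁻¹(m₍₋₁₎)` is an algebra
homomorphism. -/
theorem stmt1 {H N : Type*} [Ring H] [Algebra ℂ H] [StarRing H]
    [Ring N] [Algebra ℂ N] [StarRing N]
    (D : HopfData H) (Y : YDData H N D) :
    ∀ m n : N, Y.gamma (m * n) = Y.gamma m * Y.gamma n := by
  intro m n
  rw [gammaEq Y (m * n), gammaEq Y m, gammaEq Y n]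
  have G0 : gL Y (m * n)
      = ((Y.θ m).map fun p => ((Y.θ n).map fun q =>
          Y.act (Y.act (p.2 * q.2) (D.Sinv p.1)) (D.Sinv q.1)).sum).sum := by
    have h0 : gL Y (m * n) = (lift (Y.act.flip ∘ₗ D.Sinv)) (Y.coact (m * n)) := rfl
    rw [h0, Y.coact_mul, map_list_sum, List.map_flatMap, sum_flat']
    congr 1
    apply List.map_congr_left
    intro p _
    rw [List.map_map]
    congr 1
    apply List.map_congr_left
    intro q _
    simp only [Function.comp_apply, lift.tmul, LinearMap.comp_apply,
      LinearMap.flip_apply, Sinv_antimul, Y.act_mulH]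
  rw [G0]
  have G1 : ∀ p q : H × N, Y.act (Y.act (p.2 * q.2) (D.Sinv p.1)) (D.Sinv q.1)
      = ((D.Δ p.1).map fun v =>
          Y.act (Y.act p.2 (D.Sinv v.2) * Y.act q.2 (D.Sinv v.1)) (D.Sinv q.1)).sum := by
    intro p q
    rw [Y.act_alg]
    have hp := sumPull (Y.act.flip (D.Sinv q.1)) (D.Δ (D.Sinv p.1))
      (fun w => Y.act p.2 w.1 * Y.act q.2 w.2)
    simp only [LinearMap.flip_apply] at hp
    rw [← hp]
    have := AD D ((Y.act.flip (D.Sinv q.1)) ∘ₗ (LinearMap.mul' ℂ N)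
        ∘ₗ map (Y.act p.2) (Y.act q.2)) p.1
    simp only [LinearMap.comp_apply, map_tmul, LinearMap.mul'_apply,
      LinearMap.flip_apply] at this
    exact this
  simp only [G1]
  rw [sum_swap]
  have G2 : ∀ q : H × N,
      ((Y.θ m).map fun p => ((D.Δ p.1).map fun v =>
          Y.act (Y.act p.2 (D.Sinv v.2) * Y.act q.2 (D.Sinv v.1)) (D.Sinv q.1)).sum).sum
        = Y.act (q.2 * gL Y m) (D.Sinv q.1) := by
    intro q
    set Θq : (H ⊗[ℂ] H) ⊗[ℂ] N →ₗ[ℂ] N :=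
      (Y.act.flip (D.Sinv q.1)) ∘ₗ (LinearMap.mul' ℂ N)
        ∘ₗ (map (lift (Y.act.flip ∘ₗ D.Sinv)) (Y.act q.2 ∘ₗ D.Sinv))
        ∘ₗ (TensorProduct.comm ℂ H (H ⊗[ℂ] N)).toLinearMap
        ∘ₗ (TensorProduct.assoc ℂ H H N).toLinearMap with hΘq
    have g2a : ∀ p : H × N, ((D.Δ p.1).map fun v =>
        Y.act (Y.act p.2 (D.Sinv v.2) * Y.act q.2 (D.Sinv v.1)) (D.Sinv q.1)).sum
          = Θq (D.comul p.1 ⊗ₜ[ℂ] p.2) := by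
      intro p
      have hk := keyD D (Θq ∘ₗ ((TensorProduct.mk ℂ (H ⊗[ℂ] H) N).flip p.2)) p.1
      simp only [LinearMap.comp_apply, LinearMap.flip_apply, mk_apply] at hk
      rw [← hk]
      simp only [hΘq, LinearMap.comp_apply, LinearEquiv.coe_coe, assoc_tmul, comm_tmul,
        map_tmul, lift.tmul, LinearMap.flip_apply, LinearMap.mul'_apply]
    simp only [g2a]
    rw [MT Y Θq m]
    have g2b : ∀ p : H × N,
        Θq ((TensorProduct.assoc ℂ H H N).symm (p.1 ⊗ₜ[ℂ] Y.coact p.2))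
          = (Y.act.flip (D.Sinv q.1)) (gL Y p.2 * Y.act q.2 (D.Sinv p.1)) := by
      intro p
      have hk := keyT Y (Θq ∘ₗ (TensorProduct.assoc ℂ H H N).symm.toLinearMap
          ∘ₗ (TensorProduct.mk ℂ H (H ⊗[ℂ] N) p.1)) p.2
      simp only [LinearMap.comp_apply, LinearEquiv.coe_coe, mk_apply,
        assoc_symm_tmul] at hk
      rw [← hk]
      have e1 : ∀ r : H × N, Θq ((p.1 ⊗ₜ[ℂ] r.1) ⊗ₜ[ℂ] r.2)
          = ((Y.act.flip (D.Sinv q.1)) ∘ₗ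
              (LinearMap.mulRight ℂ (Y.act q.2 (D.Sinv p.1))))
            (Y.act r.2 (D.Sinv r.1)) := by
        intro r
        simp only [hΘq, LinearMap.comp_apply, LinearEquiv.coe_coe, assoc_tmul,
          comm_tmul, map_tmul, lift.tmul, LinearMap.flip_apply, LinearMap.mul'_apply,
          LinearMap.mulRight_apply]
      simp only [e1]
      rw [sumPull, ← gammaList]
      simp
    simp only [g2b]
    have hp2 := sumPull (Y.act.flip (D.Sinv q.1)) (Y.θ m)
      (fun p => gL Y p.2 * Y.act q.2 (D.Sinv p.1))
    rw [hp2, lemE]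
    simp
  simp only [G2]
  exact lemE2 Y n (gL Y m)
end
end

section
/- With H, N, γ, γ̂ as above, for all m, n ∈ N one has (m₍₀₎ n) ◁ S⁻¹(m₍₋₁₎) = n γ(m) and n m₍₀₎ ◁ S²(m₍₋₁₎) = γ̂(m) n, where γ(m) = m₍₀₎ ◁ S⁻¹(m₍₋₁₎) and γ̂(m) = m₍₀₎ ◁ S²(m₍₋₁₎). -/
open scoped TensorProduct

noncomputable section

namespace Aux

open TensorProduct

lemma lsum {α M X : Type*} [AddCommMonoid M] [Module ℂ M] [AddCommMonoid X] [Module ℂ X]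
    (φ : M →ₗ[ℂ] X) (l : List α) (f : α → M) :
    (l.map fun p => φ (f p)).sum = φ (l.map f).sum := by
  rw [show (fun p => φ (f p)) = (φ ∘ f) from rfl, ← List.map_map]
  exact (map_list_sum φ _).symm

lemma sum_flatMap {α β M : Type*} [AddCommMonoid M] (l : List α) (f : α → List β) (g : β → M) :
    ((l.flatMap f).map g).sum = (l.map fun a => ((f a).map g).sum).sum := by
  induction l with
  | nil => simp
  | cons a t ih => simp [List.flatMap_cons, ih]

lemma sum_flatMap' {α M : Type*} [AddCommMonoid M] (l : List α) (f : α → List M) :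
    (l.flatMap f).sum = (l.map fun a => (f a).sum).sum := by
  induction l with
  | nil => simp
  | cons a t ih => simp [List.flatMap_cons, ih]

variable {H : Type*} [Ring H] [Algebra ℂ H] (D : HopfData H)

/-- right counit contraction: `a ⊗ b ↦ ε b • a` -/
def er : H ⊗[ℂ] H →ₗ[ℂ] H :=
  (TensorProduct.rid ℂ H).toLinearMap ∘ₗ map LinearMap.id D.ε

/-- left counit contraction: `a ⊗ b ↦ ε a • b` -/
def el : H ⊗[ℂ] H →ₗ[ℂ] H :=
  (TensorProduct.lid ℂ H).toLinearMap ∘ₗ map D.ε LinearMap.id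

def KL : H ⊗[ℂ] H →ₗ[ℂ] H := LinearMap.mul' ℂ H ∘ₗ map D.S LinearMap.id

def KR : H ⊗[ℂ] H →ₗ[ℂ] H := LinearMap.mul' ℂ H ∘ₗ map LinearMap.id D.S

def K2 : H ⊗[ℂ] H →ₗ[ℂ] H :=
  LinearMap.mul' ℂ H ∘ₗ map LinearMap.id D.Sinv ∘ₗ (TensorProduct.comm ℂ H H).toLinearMap

def uH : H →ₗ[ℂ] H := Algebra.linearMap ℂ H ∘ₗ D.ε

@[simp] lemma er_tmul (a b : H) : er D (a ⊗ₜ[ℂ] b) = D.ε b • a := by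
  simp [er]

@[simp] lemma el_tmul (a b : H) : el D (a ⊗ₜ[ℂ] b) = D.ε a • b := by
  simp [el]

@[simp] lemma KL_tmul (a b : H) : KL D (a ⊗ₜ[ℂ] b) = D.S a * b := by simp [KL]

@[simp] lemma KR_tmul (a b : H) : KR D (a ⊗ₜ[ℂ] b) = a * D.S b := by simp [KR]

@[simp] lemma K2_tmul (a b : H) : K2 D (a ⊗ₜ[ℂ] b) = b * D.Sinv a := by simp [K2]

@[simp] lemma uH_apply (h : H) : uH D h = algebraMap ℂ H (D.ε h) := rfl

lemma er_comul (h : H) : er D (D.comul h) = h := by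
  rw [← D.Δ_spec, ← lsum (er D) (D.Δ h) (fun p => p.1 ⊗ₜ[ℂ] p.2)]
  simpa using D.counit_right h

lemma el_comul (h : H) : el D (D.comul h) = h := by
  rw [← D.Δ_spec, ← lsum (el D) (D.Δ h) (fun p => p.1 ⊗ₜ[ℂ] p.2)]
  simpa using D.counit_left h

lemma KL_comul (h : H) : KL D (D.comul h) = algebraMap ℂ H (D.ε h) := by
  rw [← D.Δ_spec, ← lsum (KL D) (D.Δ h) (fun p => p.1 ⊗ₜ[ℂ] p.2)]
  simpa using D.antipode_left h

lemma KR_comul (h : H) : KR D (D.comul h) = algebraMap ℂ H (D.ε h) := by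
  rw [← D.Δ_spec, ← lsum (KR D) (D.Δ h) (fun p => p.1 ⊗ₜ[ℂ] p.2)]
  simpa using D.antipode_right h

lemma coassocL :
    (TensorProduct.assoc ℂ H H H).toLinearMap ∘ₗ map D.comul LinearMap.id ∘ₗ D.comul
      = map LinearMap.id D.comul ∘ₗ D.comul :=
  LinearMap.ext fun h => by simpa using D.coassoc h

lemma Sinv_one : D.Sinv 1 = 1 := by
  conv_lhs => rw [← D.S_one]
  exact D.Sinv_S 1

lemma Sinv_antimul (a b : H) : D.Sinv (a * b) = D.Sinv b * D.Sinv a := by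
  have : D.S (D.Sinv b * D.Sinv a) = a * b := by
    rw [D.S_antimul, D.S_Sinv, D.S_Sinv]
  rw [← this, D.Sinv_S]

end Aux

namespace Aux

open TensorProduct

variable {H : Type*} [Ring H] [Algebra ℂ H] (D : HopfData H)

section Conv

variable {A : Type*} [Ring A] [Algebra ℂ A]

def conv (f g : H →ₗ[ℂ] A) : H →ₗ[ℂ] A :=
  LinearMap.mul' ℂ A ∘ₗ map f g ∘ₗ D.comul

def cunit : H →ₗ[ℂ] A := Algebra.linearMap ℂ A ∘ₗ D.ε

lemma conv_apply (f g : H →ₗ[ℂ] A) (h : H) :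
    conv D f g h = LinearMap.mul' ℂ A ((map f g) (D.comul h)) := rfl

lemma conv_unit_right (f : H →ₗ[ℂ] A) : conv D f (cunit D) = f := by
  ext h
  have key : ∀ u : H ⊗[ℂ] H, LinearMap.mul' ℂ A ((map f (cunit D)) u) = f (er D u) := by
    intro u
    induction u using TensorProduct.induction_on with
    | zero => simp
    | tmul a b =>
        simp only [map_tmul, LinearMap.mul'_apply, er_tmul, map_smul, cunit,
          LinearMap.comp_apply, Algebra.linearMap_apply]
        rw [← Algebra.commutes (D.ε b) (f a), ← Algebra.smul_def]
    | add x y hx hy => simp [hx, hy]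
  rw [conv_apply, key, er_comul]

lemma conv_unit_left (f : H →ₗ[ℂ] A) : conv D (cunit D) f = f := by
  ext h
  have key : ∀ u : H ⊗[ℂ] H, LinearMap.mul' ℂ A ((map (cunit D) f) u) = f (el D u) := by
    intro u
    induction u using TensorProduct.induction_on with
    | zero => simp
    | tmul a b =>
        simp only [map_tmul, LinearMap.mul'_apply, el_tmul, map_smul, cunit,
          LinearMap.comp_apply, Algebra.linearMap_apply]
        rw [← Algebra.smul_def]
    | add x y hx hy => simp [hx, hy]
  rw [conv_apply, key, el_comul]

lemma coassoc_el (h : H) : (map D.comul LinearMap.id) (D.comul h)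
    = (TensorProduct.assoc ℂ H H H).symm ((map LinearMap.id D.comul) (D.comul h)) := by
  rw [← D.coassoc h, LinearEquiv.symm_apply_apply]

lemma conv_assoc (f g k : H →ₗ[ℂ] A) :
    conv D (conv D f g) k = conv D f (conv D g k) := by
  have key : (LinearMap.mul' ℂ A) ∘ₗ (map (LinearMap.mul' ℂ A ∘ₗ map f g) k)
        ∘ₗ (TensorProduct.assoc ℂ H H H).symm.toLinearMap
      = (LinearMap.mul' ℂ A) ∘ₗ map f (LinearMap.mul' ℂ A ∘ₗ map g k) := by
    apply TensorProduct.ext'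
    intro a u
    induction u using TensorProduct.induction_on with
    | zero => simp only [tmul_zero, map_zero]
    | tmul b c =>
        simp only [LinearMap.comp_apply, LinearEquiv.coe_coe, assoc_symm_tmul, map_tmul,
          LinearMap.mul'_apply, mul_assoc]
    | add x y hx hy => simp only [tmul_add, map_add, hx, hy]
  ext h
  have e1 : map (conv D f g) k
      = (map (LinearMap.mul' ℂ A ∘ₗ map f g) k) ∘ₗ map D.comul LinearMap.id := by
    rw [← TensorProduct.map_comp, LinearMap.comp_id]
    rfl
  have e2 : map f (conv D g k)
      = (map f (LinearMap.mul' ℂ A ∘ₗ map g k)) ∘ₗ map LinearMap.id D.comul := by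
    rw [← TensorProduct.map_comp, LinearMap.comp_id]
    rfl
  rw [conv_apply, conv_apply, e1, e2, LinearMap.comp_apply,
    LinearMap.comp_apply, coassoc_el]
  have := LinearMap.congr_fun key ((map LinearMap.id D.comul) (D.comul h))
  simpa using this

end Conv

end Aux

namespace Aux

open TensorProduct

variable {H : Type*} [Ring H] [Algebra ℂ H] (D : HopfData H)

lemma map_id_comp {M P Q R' : Type*} [AddCommMonoid M] [Module ℂ M] [AddCommMonoid P]
    [Module ℂ P] [AddCommMonoid Q] [Module ℂ Q] [AddCommMonoid R'] [Module ℂ R']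
    (p : Q →ₗ[ℂ] R') (q : P →ₗ[ℂ] Q) :
    map (LinearMap.id : M →ₗ[ℂ] M) (p ∘ₗ q) = map LinearMap.id p ∘ₗ map LinearMap.id q := by
  rw [← TensorProduct.map_comp, LinearMap.id_comp]

lemma map_comp_id {M P Q R' : Type*} [AddCommMonoid M] [Module ℂ M] [AddCommMonoid P]
    [Module ℂ P] [AddCommMonoid Q] [Module ℂ Q] [AddCommMonoid R'] [Module ℂ R']
    (p : Q →ₗ[ℂ] R') (q : P →ₗ[ℂ] Q) :
    map (p ∘ₗ q) (LinearMap.id : M →ₗ[ℂ] M) = map p LinearMap.id ∘ₗ map q LinearMap.id := by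
  rw [← TensorProduct.map_comp, LinearMap.id_comp]

/-- `a ⊗ b ↦ S b ⊗ S a` -/
def sS : H ⊗[ℂ] H →ₗ[ℂ] H ⊗[ℂ] H := map D.S D.S ∘ₗ (TensorProduct.comm ℂ H H).toLinearMap

@[simp] lemma sS_tmul (a b : H) : sS D (a ⊗ₜ[ℂ] b) = D.S b ⊗ₜ[ℂ] D.S a := by simp [sS]

def gprime : H →ₗ[ℂ] H ⊗[ℂ] H := sS D ∘ₗ D.comul

lemma cunit_eq (h : H) : (cunit D : H →ₗ[ℂ] H ⊗[ℂ] H) h = D.ε h • ((1:H) ⊗ₜ[ℂ] (1:H)) := by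
  simp [cunit, Algebra.TensorProduct.one_def, Algebra.algebraMap_eq_smul_one]

lemma conv_comul_comulS :
    conv D D.comul (D.comul ∘ₗ D.S) = (cunit D : H →ₗ[ℂ] H ⊗[ℂ] H) := by
  have m1 : map D.comul (D.comul ∘ₗ D.S)
      = map D.comul D.comul ∘ₗ map LinearMap.id D.S := by
    rw [← TensorProduct.map_comp, LinearMap.comp_id]
  have key1 : ∀ u : H ⊗[ℂ] H,
      LinearMap.mul' ℂ (H ⊗[ℂ] H) ((map D.comul D.comul) u) = D.comul (LinearMap.mul' ℂ H u) := by
    intro u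
    induction u using TensorProduct.induction_on with
    | zero => simp
    | tmul a b => simp [D.comul_mul]
    | add x y hx hy => simp [hx, hy]
  ext h
  rw [conv_apply, m1, LinearMap.comp_apply, key1]
  have : LinearMap.mul' ℂ H ((map LinearMap.id D.S) (D.comul h)) = KR D (D.comul h) := rfl
  rw [this, KR_comul, cunit_eq, Algebra.algebraMap_eq_smul_one, map_smul, D.comul_one]

section Beast

/-- `Q₀ : a ⊗ (k ⊗ d) ↦ k ⊗ (S a * d)` -/
def Q0 : H ⊗[ℂ] (H ⊗[ℂ] H) →ₗ[ℂ] H ⊗[ℂ] H :=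
  map LinearMap.id (KL D) ∘ₗ map LinearMap.id (TensorProduct.comm ℂ H H).toLinearMap
    ∘ₗ (TensorProduct.assoc ℂ H H H).toLinearMap ∘ₗ (TensorProduct.comm ℂ H (H ⊗[ℂ] H)).toLinearMap

@[simp] lemma Q0_tmul (a k d : H) : Q0 D (a ⊗ₜ[ℂ] (k ⊗ₜ[ℂ] d)) = k ⊗ₜ[ℂ] (D.S a * d) := by
  simp [Q0]

/-- `Qm : a ⊗ ((b ⊗ e) ⊗ d) ↦ (S b * e) ⊗ (S a * d)` -/
def Qm : H ⊗[ℂ] ((H ⊗[ℂ] H) ⊗[ℂ] H) →ₗ[ℂ] H ⊗[ℂ] H :=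
  LinearMap.mul' ℂ (H ⊗[ℂ] H) ∘ₗ map (sS D) LinearMap.id
    ∘ₗ (TensorProduct.assoc ℂ H H (H ⊗[ℂ] H)).symm.toLinearMap
    ∘ₗ map LinearMap.id (TensorProduct.assoc ℂ H H H).toLinearMap

lemma key1 :
    map (LinearMap.id : H ⊗[ℂ] H →ₗ[ℂ] H ⊗[ℂ] H) D.comul
      ∘ₗ (TensorProduct.assoc ℂ H H H).symm.toLinearMap
    = (TensorProduct.assoc ℂ H H (H ⊗[ℂ] H)).symm.toLinearMap
      ∘ₗ map LinearMap.id (map LinearMap.id D.comul) := by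
  apply TensorProduct.ext'
  intro a u
  induction u using TensorProduct.induction_on with
  | zero => simp only [tmul_zero, map_zero]
  | tmul b e =>
      simp only [LinearMap.comp_apply, LinearEquiv.coe_coe, assoc_symm_tmul, map_tmul,
        LinearMap.id_apply]
  | add x y hx hy => simp only [tmul_add, map_add, hx, hy]

lemma key2 : Qm D = Q0 D ∘ₗ map LinearMap.id (map (KL D) LinearMap.id) := by
  apply TensorProduct.ext'
  intro a u
  induction u using TensorProduct.induction_on with
  | zero => simp only [tmul_zero, LinearMap.map_zero]
  | tmul v d =>
      induction v using TensorProduct.induction_on with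
      | zero => simp only [zero_tmul, tmul_zero, LinearMap.map_zero]
      | tmul b e =>
          simp only [Qm, LinearMap.comp_apply, LinearEquiv.coe_coe, map_tmul,
            LinearMap.id_apply, assoc_tmul, assoc_symm_tmul, sS_tmul, KL_tmul,
            LinearMap.mul'_apply, Algebra.TensorProduct.tmul_mul_tmul, Q0_tmul]
      | add x y hx hy => simp only [add_tmul, tmul_add, map_add, hx, hy]
  | add x y hx hy => simp only [tmul_add, map_add, hx, hy]

lemma KLc : KL D ∘ₗ D.comul = uH D := LinearMap.ext (KL_comul D)

lemma key4 : map (uH D) LinearMap.id ∘ₗ D.comul = (TensorProduct.mk ℂ H H) 1 := by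
  have helper : ∀ u : H ⊗[ℂ] H, (map (uH D) LinearMap.id) u = 1 ⊗ₜ[ℂ] el D u := by
    intro u
    induction u using TensorProduct.induction_on with
    | zero => simp
    | tmul a b =>
        simp only [map_tmul, uH_apply, LinearMap.id_apply, el_tmul,
          Algebra.algebraMap_eq_smul_one]
        rw [smul_tmul]
    | add x y hx hy => simp [hx, hy, tmul_add]
  ext h
  simp only [LinearMap.comp_apply, helper, el_comul, mk_apply]

lemma key5 : Q0 D ∘ₗ map LinearMap.id ((TensorProduct.mk ℂ H H) 1)
    = (TensorProduct.mk ℂ H H) 1 ∘ₗ KL D := by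
  apply TensorProduct.ext'
  intro a d
  simp only [LinearMap.comp_apply, map_tmul, LinearMap.id_apply, mk_apply, Q0_tmul, KL_tmul]

lemma conv_gprime_comul :
    conv D (gprime D) D.comul = (cunit D : H →ₗ[ℂ] H ⊗[ℂ] H) := by
  ext h
  have m1 : map (gprime D) D.comul
      = map (sS D) LinearMap.id ∘ₗ map D.comul D.comul := by
    have : gprime D = sS D ∘ₗ D.comul := rfl
    rw [this, show (D.comul : H →ₗ[ℂ] H ⊗[ℂ] H) = LinearMap.id ∘ₗ D.comul from
      (LinearMap.id_comp _).symm]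
    rw [TensorProduct.map_comp]
    rw [LinearMap.id_comp]
  have m2 : map D.comul D.comul
      = map LinearMap.id D.comul ∘ₗ map D.comul LinearMap.id := by
    rw [← TensorProduct.map_comp, LinearMap.id_comp, LinearMap.comp_id]
  rw [conv_apply, m1, m2]
  simp only [LinearMap.comp_apply]
  rw [coassoc_el]
  have k1 : ∀ x : H ⊗[ℂ] (H ⊗[ℂ] H),
      (map LinearMap.id D.comul) ((TensorProduct.assoc ℂ H H H).symm x)
        = (TensorProduct.assoc ℂ H H (H ⊗[ℂ] H)).symm
            ((map LinearMap.id (map LinearMap.id D.comul)) x) := by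
    intro x
    simpa using LinearMap.congr_fun (key1 D) x
  rw [k1]
  -- now goal: mul'A ((map sS id) (β.symm ((map id (map id comul)) ((map id comul) (comul h))))) = cunit h
  have comb1 : (map (LinearMap.id : H →ₗ[ℂ] H) (map LinearMap.id D.comul))
        ((map LinearMap.id D.comul) (D.comul h))
      = (map LinearMap.id (map LinearMap.id D.comul ∘ₗ D.comul)) (D.comul h) := by
    rw [map_id_comp]; rfl
  rw [comb1, ← coassocL D]
  have comb2 : (map (LinearMap.id : H →ₗ[ℂ] H)
        ((TensorProduct.assoc ℂ H H H).toLinearMap ∘ₗ map D.comul LinearMap.id ∘ₗ D.comul))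
        (D.comul h)
      = (map LinearMap.id (TensorProduct.assoc ℂ H H H).toLinearMap)
          ((map LinearMap.id (map D.comul LinearMap.id))
            ((map LinearMap.id D.comul) (D.comul h))) := by
    rw [map_id_comp, map_id_comp]; rfl
  rw [comb2]
  have qm : LinearMap.mul' ℂ (H ⊗[ℂ] H) ((map (sS D) LinearMap.id)
        ((TensorProduct.assoc ℂ H H (H ⊗[ℂ] H)).symm
          ((map LinearMap.id (TensorProduct.assoc ℂ H H H).toLinearMap)
            ((map LinearMap.id (map D.comul LinearMap.id))
              ((map LinearMap.id D.comul) (D.comul h))))))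
      = Qm D ((map LinearMap.id (map D.comul LinearMap.id))
              ((map LinearMap.id D.comul) (D.comul h))) := rfl
  rw [qm, key2 D, LinearMap.comp_apply]
  have comb3 : (map (LinearMap.id : H →ₗ[ℂ] H) (map (KL D) LinearMap.id))
        ((map LinearMap.id (map D.comul LinearMap.id)) ((map LinearMap.id D.comul) (D.comul h)))
      = (map LinearMap.id (map (uH D) LinearMap.id)) ((map LinearMap.id D.comul) (D.comul h)) := by
    rw [← LinearMap.comp_apply, ← map_id_comp, ← map_comp_id, KLc]
  rw [comb3]
  have comb4 : (map (LinearMap.id : H →ₗ[ℂ] H) (map (uH D) LinearMap.id))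
        ((map LinearMap.id D.comul) (D.comul h))
      = (map LinearMap.id ((TensorProduct.mk ℂ H H) 1)) (D.comul h) := by
    rw [← LinearMap.comp_apply, ← map_id_comp, key4]
  have k5 : ∀ x : H ⊗[ℂ] H,
      Q0 D ((map LinearMap.id ((TensorProduct.mk ℂ H H) 1)) x)
        = (TensorProduct.mk ℂ H H) 1 (KL D x) := by
    intro x
    simpa using LinearMap.congr_fun (key5 D) x
  rw [comb4, k5, KL_comul, cunit_eq, mk_apply, Algebra.algebraMap_eq_smul_one]
  rw [tmul_smul]  -- 1 ⊗ (ε h • 1) = ε h • (1 ⊗ 1)? tmul_smul : a ⊗ₜ (r • b) = r • (a ⊗ₜ b)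

end Beast

lemma comul_S_map : D.comul ∘ₗ D.S = sS D ∘ₗ D.comul := by
  have h1 : conv D D.comul (D.comul ∘ₗ D.S) = (cunit D : H →ₗ[ℂ] H ⊗[ℂ] H) :=
    conv_comul_comulS D
  have h2 : conv D (gprime D) D.comul = (cunit D : H →ₗ[ℂ] H ⊗[ℂ] H) :=
    conv_gprime_comul D
  have : gprime D = D.comul ∘ₗ D.S := by
    calc gprime D = conv D (gprime D) (cunit D) := (conv_unit_right D _).symm
      _ = conv D (gprime D) (conv D D.comul (D.comul ∘ₗ D.S)) := by rw [h1]
      _ = conv D (conv D (gprime D) D.comul) (D.comul ∘ₗ D.S) := (conv_assoc D _ _ _).symm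
      _ = conv D (cunit D) (D.comul ∘ₗ D.S) := by rw [h2]
      _ = D.comul ∘ₗ D.S := conv_unit_left D _
  rw [← this]; rfl

lemma comul_S (h : H) :
    D.comul (D.S h) = map D.S D.S ((TensorProduct.comm ℂ H H) (D.comul h)) := by
  have := LinearMap.congr_fun (comul_S_map D) h
  simpa [sS] using this

end Aux

namespace Aux

open TensorProduct

variable {H : Type*} [Ring H] [Algebra ℂ H] (D : HopfData H)

lemma comm_comm (u : H ⊗[ℂ] H) :
    (TensorProduct.comm ℂ H H) ((TensorProduct.comm ℂ H H) u) = u := by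
  induction u using TensorProduct.induction_on with
  | zero => simp
  | tmul a b => simp
  | add x y hx hy => simp [hx, hy]

lemma mapSinv_mapS (u : H ⊗[ℂ] H) :
    map D.Sinv D.Sinv (map D.S D.S u) = u := by
  induction u using TensorProduct.induction_on with
  | zero => simp
  | tmul a b => simp [D.Sinv_S]
  | add x y hx hy => simp [hx, hy]

lemma comul_Sinv (h : H) :
    D.comul (D.Sinv h)
      = (TensorProduct.comm ℂ H H) (map D.Sinv D.Sinv (D.comul h)) := by
  have e1 := comul_S D (D.Sinv h)
  rw [D.S_Sinv] at e1
  have e2 : map D.Sinv D.Sinv (D.comul h)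
      = (TensorProduct.comm ℂ H H) (D.comul (D.Sinv h)) := by
    rw [e1, mapSinv_mapS]
  rw [e2, comm_comm]

lemma comul_S2 (h : H) :
    D.comul (D.S (D.S h)) = map (D.S ∘ₗ D.S) (D.S ∘ₗ D.S) (D.comul h) := by
  rw [comul_S D (D.S h), comul_S D h]
  generalize D.comul h = u
  induction u using TensorProduct.induction_on with
  | zero => simp
  | tmul a b => simp
  | add x y hx hy => simp [hx, hy]

lemma K2_comul (h : H) : K2 D (D.comul h) = algebraMap ℂ H (D.ε h) := by
  have key : ∀ u : H ⊗[ℂ] H, K2 D u = D.Sinv (KR D u) := by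
    intro u
    induction u using TensorProduct.induction_on with
    | zero => simp
    | tmul a b => simp [Sinv_antimul, D.Sinv_S]
    | add x y hx hy => simp [hx, hy]
  rw [key, KR_comul, Algebra.algebraMap_eq_smul_one, map_smul, Sinv_one]

end Aux

namespace Aux

open TensorProduct

variable {H N : Type*} [Ring H] [Algebra ℂ H] [Ring N] [Algebra ℂ N]
  {D : HopfData H} (Y : YDData H N D)

/-- `a ⊗ x ↦ act n a * x` -/
def Bn (n : N) : H ⊗[ℂ] N →ₗ[ℂ] N :=
  LinearMap.mul' ℂ N ∘ₗ map (Y.act n) LinearMap.id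

@[simp] lemma Bn_tmul (n : N) (a : H) (x : N) :
    Bn Y n (a ⊗ₜ[ℂ] x) = Y.act n a * x := by simp [Bn]

/-- `a ⊗ x ↦ act x (Sinv a)` -/
def Gm : H ⊗[ℂ] N →ₗ[ℂ] N :=
  lift Y.act ∘ₗ map LinearMap.id D.Sinv ∘ₗ (TensorProduct.comm ℂ H N).toLinearMap

@[simp] lemma Gm_tmul (a : H) (x : N) : Gm Y (a ⊗ₜ[ℂ] x) = Y.act x (D.Sinv a) := by
  simp [Gm]

/-- `a ⊗ x ↦ act x (S (S a))` -/
def Gh : H ⊗[ℂ] N →ₗ[ℂ] N :=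
  lift Y.act ∘ₗ map LinearMap.id (D.S ∘ₗ D.S) ∘ₗ (TensorProduct.comm ℂ H N).toLinearMap

@[simp] lemma Gh_tmul (a : H) (x : N) : Gh Y (a ⊗ₜ[ℂ] x) = Y.act x (D.S (D.S a)) := by
  simp [Gh]

lemma gamma_eq (m : N) : Y.gamma m = Gm Y (Y.coact m) := by
  rw [← Y.θ_spec, YDData.gamma, ← lsum (Gm Y) (Y.θ m) (fun p => p.1 ⊗ₜ[ℂ] p.2)]
  simp

lemma gammaHat_eq (m : N) : Y.gammaHat m = Gh Y (Y.coact m) := by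
  rw [← Y.θ_spec, YDData.gammaHat, ← lsum (Gh Y) (Y.θ m) (fun p => p.1 ⊗ₜ[ℂ] p.2)]
  simp

lemma bc' (u n : N) : u * n = Bn Y n (Y.coact u) := by
  rw [← Y.θ_spec, ← lsum (Bn Y n) (Y.θ u) (fun p => p.1 ⊗ₜ[ℂ] p.2)]
  simpa using Y.bc u n

lemma act_alg' (u v : N) (h : H) :
    Y.act (u * v) h = LinearMap.mul' ℂ N ((map (Y.act u) (Y.act v)) (D.comul h)) := by
  have l1 : ((D.Δ h).map fun p => Y.act u p.1 * Y.act v p.2).sum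
      = (LinearMap.mul' ℂ N ∘ₗ map (Y.act u) (Y.act v))
          ((D.Δ h).map fun p => p.1 ⊗ₜ[ℂ] p.2).sum := by
    rw [← lsum]
    simp
  rw [Y.act_alg, l1, D.Δ_spec]
  rfl

lemma coact_coassoc_el (m : N) :
    (map D.comul LinearMap.id) (Y.coact m)
      = (TensorProduct.assoc ℂ H H N).symm ((map LinearMap.id Y.coact) (Y.coact m)) := by
  rw [← Y.coact_coassoc m, LinearEquiv.symm_apply_apply]

/-- the 5-linear evaluator of the Yetter–Drinfeld condition:
`(t1 ⊗ (t2 ⊗ t3)) ⊗ (p1 ⊗ p2) ↦ (Sinv t3 * p1 * t1) ⊗ (act p2 t2)`. -/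
def Cbig : (H ⊗[ℂ] (H ⊗[ℂ] H)) ⊗[ℂ] (H ⊗[ℂ] N) →ₗ[ℂ] H ⊗[ℂ] N :=
  map (LinearMap.mul' ℂ H) (lift Y.act)
    ∘ₗ (tensorTensorTensorComm ℂ H N H H).toLinearMap
    ∘ₗ map LinearMap.id (TensorProduct.comm ℂ H H).toLinearMap
    ∘ₗ (TensorProduct.assoc ℂ (H ⊗[ℂ] N) H H).toLinearMap
    ∘ₗ map (TensorProduct.comm ℂ H (H ⊗[ℂ] N)).toLinearMap LinearMap.id
    ∘ₗ (TensorProduct.comm ℂ H (H ⊗[ℂ] (H ⊗[ℂ] N))).toLinearMap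
    ∘ₗ map LinearMap.id (map LinearMap.id
        (map (LinearMap.mul' ℂ H ∘ₗ map D.Sinv LinearMap.id) LinearMap.id))
    ∘ₗ map LinearMap.id (map LinearMap.id (TensorProduct.assoc ℂ H H N).symm.toLinearMap)
    ∘ₗ map LinearMap.id (TensorProduct.assoc ℂ H H (H ⊗[ℂ] N)).toLinearMap
    ∘ₗ (TensorProduct.assoc ℂ H (H ⊗[ℂ] H) (H ⊗[ℂ] N)).toLinearMap

@[simp] lemma Cbig_tmul (t1 t2 t3 p1 : H) (p2 : N) :
    Cbig Y ((t1 ⊗ₜ[ℂ] (t2 ⊗ₜ[ℂ] t3)) ⊗ₜ[ℂ] (p1 ⊗ₜ[ℂ] p2))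
      = (D.Sinv t3 * p1 * t1) ⊗ₜ[ℂ] Y.act p2 t2 := by
  simp [Cbig, tensorTensorTensorComm_tmul]

/-- the canonical right-nested `Δ²`. -/
def T3 {H : Type*} [Ring H] [Algebra ℂ H] (D : HopfData H) : H →ₗ[ℂ] H ⊗[ℂ] (H ⊗[ℂ] H) :=
  map LinearMap.id D.comul ∘ₗ D.comul

lemma Δ3_sum (h : H) :
    ((D.Δ3 h).map fun t => t.1 ⊗ₜ[ℂ] (t.2.1 ⊗ₜ[ℂ] t.2.2)).sum = T3 D h := by
  rw [HopfData.Δ3, sum_flatMap]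
  have inner : ∀ p : H × H,
      (((D.Δ p.1).map fun q => (q.1, q.2, p.2)).map fun t =>
          t.1 ⊗ₜ[ℂ] (t.2.1 ⊗ₜ[ℂ] t.2.2)).sum
        = ((TensorProduct.assoc ℂ H H H).toLinearMap
            ∘ₗ (TensorProduct.mk ℂ (H ⊗[ℂ] H) H).flip p.2) (D.comul p.1) := by
    intro p
    rw [List.map_map]
    rw [← D.Δ_spec,
      ← lsum ((TensorProduct.assoc ℂ H H H).toLinearMap
          ∘ₗ (TensorProduct.mk ℂ (H ⊗[ℂ] H) H).flip p.2) (D.Δ p.1) (fun q => q.1 ⊗ₜ[ℂ] q.2)]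
    refine congrArg List.sum (List.map_congr_left fun q _ => ?_)
    simp
  calc ((D.Δ h).map fun p =>
        (((D.Δ p.1).map fun q => (q.1, q.2, p.2)).map fun t =>
          t.1 ⊗ₜ[ℂ] (t.2.1 ⊗ₜ[ℂ] t.2.2)).sum).sum
      = ((D.Δ h).map fun p =>
          ((TensorProduct.assoc ℂ H H H).toLinearMap ∘ₗ map D.comul LinearMap.id)
            (p.1 ⊗ₜ[ℂ] p.2)).sum := by
        apply congrArg
        apply List.map_congr_left
        intro p _
        rw [inner p]
        simp
    _ = ((TensorProduct.assoc ℂ H H H).toLinearMap ∘ₗ map D.comul LinearMap.id)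
          ((D.Δ h).map fun p => p.1 ⊗ₜ[ℂ] p.2).sum := by
        rw [lsum]
    _ = T3 D h := by
        rw [D.Δ_spec]
        simp only [LinearMap.comp_apply, LinearEquiv.coe_coe]
        rw [D.coassoc h]
        rfl

lemma yd' (x : N) (h : H) :
    Y.coact (Y.act x h) = Cbig Y (T3 D h ⊗ₜ[ℂ] Y.coact x) := by
  rw [Y.yd x h, sum_flatMap']
  have inner : ∀ t : H × H × H,
      ((Y.θ x).map fun p =>
          (D.Sinv t.2.2 * p.1 * t.1) ⊗ₜ[ℂ] Y.act p.2 t.2.1).sum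
        = Cbig Y ((t.1 ⊗ₜ[ℂ] (t.2.1 ⊗ₜ[ℂ] t.2.2)) ⊗ₜ[ℂ] Y.coact x) := by
    intro t
    have l1 := lsum (Cbig Y ∘ₗ (TensorProduct.mk ℂ (H ⊗[ℂ] (H ⊗[ℂ] H)) (H ⊗[ℂ] N))
        (t.1 ⊗ₜ[ℂ] (t.2.1 ⊗ₜ[ℂ] t.2.2))) (Y.θ x) (fun p => p.1 ⊗ₜ[ℂ] p.2)
    simp only [LinearMap.comp_apply, mk_apply] at l1
    rw [← Y.θ_spec, ← l1]
    refine congrArg List.sum (List.map_congr_left fun p _ => ?_)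
    simp
  calc ((D.Δ3 h).map fun t => ((Y.θ x).map fun p =>
          (D.Sinv t.2.2 * p.1 * t.1) ⊗ₜ[ℂ] Y.act p.2 t.2.1).sum).sum
      = ((D.Δ3 h).map fun t =>
          (Cbig Y ∘ₗ (TensorProduct.mk ℂ (H ⊗[ℂ] (H ⊗[ℂ] H)) (H ⊗[ℂ] N)).flip (Y.coact x))
            (t.1 ⊗ₜ[ℂ] (t.2.1 ⊗ₜ[ℂ] t.2.2))).sum := by
        apply congrArg
        apply List.map_congr_left
        intro t _
        rw [inner t]
        simp
    _ = (Cbig Y ∘ₗ (TensorProduct.mk ℂ (H ⊗[ℂ] (H ⊗[ℂ] H)) (H ⊗[ℂ] N)).flip (Y.coact x))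
          ((D.Δ3 h).map fun t => t.1 ⊗ₜ[ℂ] (t.2.1 ⊗ₜ[ℂ] t.2.2)).sum := by
        rw [lsum]
    _ = Cbig Y (T3 D h ⊗ₜ[ℂ] Y.coact x) := by rw [Δ3_sum]; simp

end Aux

set_option maxHeartbeats 1000000
set_option synthInstance.maxHeartbeats 400000

namespace Aux

open TensorProduct

variable {H N : Type*} [Ring H] [Algebra ℂ H] [Ring N] [Algebra ℂ N]
  {D : HopfData H} (Y : YDData H N D)

/-- `a ⊗ x ↦ act (x * n) (Sinv a)` -/
def Phi1 (n : N) : H ⊗[ℂ] N →ₗ[ℂ] N :=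
  lift Y.act ∘ₗ (TensorProduct.comm ℂ H N).toLinearMap
    ∘ₗ map D.Sinv (LinearMap.mulRight ℂ n)

@[simp] lemma Phi1_tmul (n : N) (a : H) (x : N) :
    Phi1 Y n (a ⊗ₜ[ℂ] x) = Y.act (x * n) (D.Sinv a) := by
  simp [Phi1]

/-- `a ⊗ u ↦ act (Bn n u) (Sinv a)` -/
def M1 (n : N) : H ⊗[ℂ] (H ⊗[ℂ] N) →ₗ[ℂ] N :=
  lift Y.act ∘ₗ map (Bn Y n) D.Sinv ∘ₗ (TensorProduct.comm ℂ H (H ⊗[ℂ] N)).toLinearMap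

@[simp] lemma M1_tmul (n : N) (a : H) (u : H ⊗[ℂ] N) :
    M1 Y n (a ⊗ₜ[ℂ] u) = Y.act (Bn Y n u) (D.Sinv a) := by
  simp [M1]

/-- `(b ⊗ c) ⊗ d ↦ act n (d * Sinv c) * act x (Sinv b)` -/
def W1 (n x : N) : (H ⊗[ℂ] H) ⊗[ℂ] H →ₗ[ℂ] N :=
  LinearMap.mul' ℂ N
    ∘ₗ map (Y.act n ∘ₗ LinearMap.mul' ℂ H ∘ₗ map LinearMap.id D.Sinv) (Y.act x ∘ₗ D.Sinv)
    ∘ₗ (TensorProduct.assoc ℂ H H H).symm.toLinearMap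
    ∘ₗ map LinearMap.id (TensorProduct.comm ℂ H H).toLinearMap
    ∘ₗ (TensorProduct.comm ℂ (H ⊗[ℂ] H) H).toLinearMap

@[simp] lemma W1_tmul (n x : N) (b c d : H) :
    W1 Y n x ((b ⊗ₜ[ℂ] c) ⊗ₜ[ℂ] d) = Y.act n (d * D.Sinv c) * Y.act x (D.Sinv b) := by
  simp [W1]

lemma f1a (n : N) : Phi1 Y n = M1 Y n ∘ₗ map LinearMap.id Y.coact := by
  apply TensorProduct.ext'
  intro a x
  simp only [Phi1_tmul, LinearMap.comp_apply, map_tmul, LinearMap.id_apply, M1_tmul]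
  rw [bc' Y x n]

lemma id1_maps (n : N) :
    M1 Y n ∘ₗ (TensorProduct.assoc ℂ H H N).toLinearMap ∘ₗ map D.comul LinearMap.id
      = LinearMap.mulLeft ℂ n ∘ₗ Gm Y := by
  apply TensorProduct.ext'
  intro a x
  simp only [LinearMap.comp_apply, map_tmul, LinearMap.id_apply, LinearEquiv.coe_coe,
    Gm_tmul, LinearMap.mulLeft_apply]
  -- goal : M1 (assoc ((comul a) ⊗ x)) = n * act x (Sinv a)
  have h2 : ∀ a₁ a₂ : H,
      Y.act (Y.act n a₂ * x) (D.Sinv a₁) = W1 Y n x ((D.comul a₁) ⊗ₜ[ℂ] a₂) := by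
    intro a₁ a₂
    rw [act_alg' Y (Y.act n a₂) x (D.Sinv a₁), comul_Sinv D a₁]
    have h3 : ∀ w : H ⊗[ℂ] H,
        LinearMap.mul' ℂ N ((map (Y.act (Y.act n a₂)) (Y.act x))
            ((TensorProduct.comm ℂ H H) ((map D.Sinv D.Sinv) w)))
          = W1 Y n x (w ⊗ₜ[ℂ] a₂) := by
      intro w
      induction w using TensorProduct.induction_on with
      | zero => simp
      | tmul p q =>
          simp only [map_tmul, comm_tmul, LinearMap.mul'_apply, W1_tmul]
          rw [← Y.act_mulH]
      | add w₁ w₂ hw₁ hw₂ =>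
          simp only [map_add, add_tmul, hw₁, hw₂]
    exact h3 (D.comul a₁)
  have h1 : ∀ u : H ⊗[ℂ] H,
      M1 Y n ((TensorProduct.assoc ℂ H H N) (u ⊗ₜ[ℂ] x))
        = (W1 Y n x ∘ₗ map D.comul LinearMap.id) u := by
    intro u
    induction u using TensorProduct.induction_on with
    | zero => simp
    | tmul a₁ a₂ =>
        simp only [assoc_tmul, M1_tmul, Bn_tmul, LinearMap.comp_apply, map_tmul,
          LinearMap.id_apply]
        exact h2 a₁ a₂
    | add u₁ u₂ hu₁ hu₂ => simp only [add_tmul, map_add, hu₁, hu₂]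
  rw [h1 (D.comul a), LinearMap.comp_apply, coassoc_el D a]
  have h4 : ∀ (p : H) (w : H ⊗[ℂ] H),
      W1 Y n x ((TensorProduct.assoc ℂ H H H).symm (p ⊗ₜ[ℂ] w))
        = Y.act n (K2 D w) * Y.act x (D.Sinv p) := by
    intro p w
    induction w using TensorProduct.induction_on with
    | zero => simp
    | tmul b c => simp only [assoc_symm_tmul, W1_tmul, K2_tmul]
    | add w₁ w₂ hw₁ hw₂ =>
        simp only [tmul_add, map_add, hw₁, hw₂, add_mul]
  have h5 : ∀ u : H ⊗[ℂ] H,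
      W1 Y n x ((TensorProduct.assoc ℂ H H H).symm ((map LinearMap.id D.comul) u))
        = n * Y.act x (D.Sinv (er D u)) := by
    intro u
    induction u using TensorProduct.induction_on with
    | zero => simp
    | tmul p q =>
        simp only [map_tmul, LinearMap.id_apply, er_tmul]
        rw [h4 p (D.comul q), K2_comul, Algebra.algebraMap_eq_smul_one, map_smul, Y.act_one,
          map_smul, map_smul, smul_mul_assoc, mul_smul_comm]
    | add u₁ u₂ hu₁ hu₂ =>
        simp only [map_add, hu₁, hu₂, mul_add]
  rw [h5 (D.comul a), er_comul]

lemma identity1 (m n : N) :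
    ((Y.θ m).map fun p => Y.act (p.2 * n) (D.Sinv p.1)).sum = n * Y.gamma m := by
  have l0 : ((Y.θ m).map fun p => Y.act (p.2 * n) (D.Sinv p.1)).sum
      = Phi1 Y n (Y.coact m) := by
    rw [← Y.θ_spec, ← lsum (Phi1 Y n) (Y.θ m) (fun p => p.1 ⊗ₜ[ℂ] p.2)]
    simp
  rw [l0]
  have l1 := LinearMap.congr_fun (f1a Y n) (Y.coact m)
  rw [l1, LinearMap.comp_apply, ← Y.coact_coassoc m]
  have l2 := LinearMap.congr_fun (id1_maps Y n) (Y.coact m)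
  simp only [LinearMap.comp_apply, LinearEquiv.coe_coe] at l2
  rw [l2, gamma_eq]
  rfl

end Aux

namespace Aux

open TensorProduct

section Hpure

variable {H : Type*} [Ring H] [Algebra ℂ H] (D : HopfData H)

lemma comul_S2_swap : ∀ u : H ⊗[ℂ] H,
    (map LinearMap.id D.comul) ((map (D.S ∘ₗ D.S) (D.S ∘ₗ D.S)) u)
      = (map (D.S ∘ₗ D.S) (map (D.S ∘ₗ D.S) (D.S ∘ₗ D.S))) ((map LinearMap.id D.comul) u) := by
  intro u
  induction u using TensorProduct.induction_on with
  | zero => simp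
  | tmul a b =>
      simp only [map_tmul, LinearMap.id_apply, LinearMap.comp_apply]
      rw [comul_S2 D b]
  | add u v hu hv => simp [hu, hv]

lemma T3_S2 (h : H) :
    T3 D (D.S (D.S h))
      = (map (D.S ∘ₗ D.S) (map (D.S ∘ₗ D.S) (D.S ∘ₗ D.S))) (T3 D h) := by
  have e : T3 D (D.S (D.S h)) = (map LinearMap.id D.comul) (D.comul (D.S (D.S h))) := rfl
  rw [e, comul_S2 D h, comul_S2_swap]
  rfl

/-- reassociator `l₁ ⊗ (l₂ ⊗ (c₁ ⊗ c₂)) ↦ (l₁ ⊗ (l₂ ⊗ c₁)) ⊗ c₂` -/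
def phi4 : H ⊗[ℂ] (H ⊗[ℂ] (H ⊗[ℂ] H)) →ₗ[ℂ] (H ⊗[ℂ] (H ⊗[ℂ] H)) ⊗[ℂ] H :=
  (TensorProduct.assoc ℂ H (H ⊗[ℂ] H) H).symm.toLinearMap
    ∘ₗ map LinearMap.id (TensorProduct.assoc ℂ H H H).symm.toLinearMap

@[simp] lemma phi4_tmul (l₁ l₂ c₁ c₂ : H) :
    phi4 (l₁ ⊗ₜ[ℂ] (l₂ ⊗ₜ[ℂ] (c₁ ⊗ₜ[ℂ] c₂))) = (l₁ ⊗ₜ[ℂ] (l₂ ⊗ₜ[ℂ] c₁)) ⊗ₜ[ℂ] c₂ := by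
  simp [phi4]

lemma bridge :
    map (map LinearMap.id D.comul) LinearMap.id
        ∘ₗ (TensorProduct.assoc ℂ H H H).symm.toLinearMap
      = (phi4 (H := H)) ∘ₗ map LinearMap.id (TensorProduct.assoc ℂ H H H).toLinearMap
          ∘ₗ map LinearMap.id (map D.comul LinearMap.id) := by
  apply TensorProduct.ext'
  intro l₁ u
  induction u using TensorProduct.induction_on with
  | zero => simp
  | tmul l₂ l₃ =>
      simp only [LinearMap.comp_apply, LinearEquiv.coe_coe, assoc_symm_tmul, map_tmul,
        LinearMap.id_apply]
      generalize D.comul l₂ = w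
      induction w using TensorProduct.induction_on with
      | zero => simp
      | tmul p q => simp only [assoc_tmul, phi4_tmul]
      | add w₁ w₂ hw₁ hw₂ => simp only [add_tmul, tmul_add, map_add, hw₁, hw₂]
  | add u v hu hv => simp only [tmul_add, map_add, hu, hv]

lemma coassoc4 (h : H) :
    (map (T3 D) LinearMap.id) (D.comul h)
      = phi4 ((map LinearMap.id (map LinearMap.id D.comul)) (T3 D h)) := by
  have e1 : (map (T3 D) LinearMap.id) (D.comul h)
      = (map (map LinearMap.id D.comul) LinearMap.id)
          ((map D.comul LinearMap.id) (D.comul h)) := by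
    rw [show T3 D = map LinearMap.id D.comul ∘ₗ D.comul from rfl, map_comp_id,
      LinearMap.comp_apply]
  rw [e1, coassoc_el D h]
  have e2 := LinearMap.congr_fun (bridge D) ((map LinearMap.id D.comul) (D.comul h))
  simp only [LinearMap.comp_apply, LinearEquiv.coe_coe] at e2
  rw [e2]
  congr 1
  have L : (map LinearMap.id (TensorProduct.assoc ℂ H H H).toLinearMap)
      ((map LinearMap.id (map D.comul LinearMap.id)) ((map LinearMap.id D.comul) (D.comul h)))
    = (map LinearMap.id ((TensorProduct.assoc ℂ H H H).toLinearMap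
        ∘ₗ map D.comul LinearMap.id ∘ₗ D.comul)) (D.comul h) := by
    rw [map_id_comp, map_id_comp]
    rfl
  have R : (map LinearMap.id (map LinearMap.id D.comul)) (T3 D h)
      = (map LinearMap.id (map LinearMap.id D.comul ∘ₗ D.comul)) (D.comul h) := by
    rw [map_id_comp]
    rfl
  rw [L, R, coassocL D]

end Hpure

variable {H N : Type*} [Ring H] [Algebra ℂ H] [Ring N] [Algebra ℂ N]
  {D : HopfData H} (Y : YDData H N D)

/-- `a ⊗ x ↦ act (n * x) (S (S a))` -/
def Phi2 (n : N) : H ⊗[ℂ] N →ₗ[ℂ] N :=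
  lift Y.act ∘ₗ (TensorProduct.comm ℂ H N).toLinearMap
    ∘ₗ map (D.S ∘ₗ D.S) (LinearMap.mulLeft ℂ n)

@[simp] lemma Phi2_tmul (n : N) (a : H) (x : N) :
    Phi2 Y n (a ⊗ₜ[ℂ] x) = Y.act (n * x) (D.S (D.S a)) := by
  simp [Phi2]

/-- `a₁ ⊗ a₂ ↦ S²a₁ ⊗ act x (S²a₂)` -/
def Rx (x : N) : H ⊗[ℂ] H →ₗ[ℂ] H ⊗[ℂ] N :=
  map (D.S ∘ₗ D.S) (Y.act x ∘ₗ (D.S ∘ₗ D.S))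

@[simp] lemma Rx_tmul (x : N) (a₁ a₂ : H) :
    Rx Y x (a₁ ⊗ₜ[ℂ] a₂) = (D.S (D.S a₁)) ⊗ₜ[ℂ] Y.act x (D.S (D.S a₂)) := by
  simp [Rx]

/-- `a ⊗ x ↦ Σ S²a₍₁₎ ⊗ act x (S²a₍₂₎)` -/
def Dp : H ⊗[ℂ] N →ₗ[ℂ] H ⊗[ℂ] N :=
  map (D.S ∘ₗ D.S) (Gh Y) ∘ₗ (TensorProduct.assoc ℂ H H N).toLinearMap
    ∘ₗ map D.comul LinearMap.id

/-- `a ⊗ u ↦ Cbig (T3 (S²a) ⊗ u)` -/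
def CY : H ⊗[ℂ] (H ⊗[ℂ] N) →ₗ[ℂ] H ⊗[ℂ] N :=
  Cbig Y ∘ₗ map (T3 D ∘ₗ (D.S ∘ₗ D.S)) LinearMap.id

end Aux

namespace Aux

open TensorProduct

variable {H N : Type*} [Ring H] [Algebra ℂ H] [Ring N] [Algebra ℂ N]
  {D : HopfData H} (Y : YDData H N D)

def ZM (x : N) : H ⊗[ℂ] (H ⊗[ℂ] (H ⊗[ℂ] H)) →ₗ[ℂ] H ⊗[ℂ] N :=
  Cbig Y ∘ₗ map (map (D.S ∘ₗ D.S) (map (D.S ∘ₗ D.S) (D.S ∘ₗ D.S)))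
    ((TensorProduct.mk ℂ H N).flip x) ∘ₗ phi4

@[simp] lemma ZM_tmul (x : N) (l₁ l₂ c₁ c₂ : H) :
    ZM Y x (l₁ ⊗ₜ[ℂ] (l₂ ⊗ₜ[ℂ] (c₁ ⊗ₜ[ℂ] c₂)))
      = (D.S c₁ * c₂ * D.S (D.S l₁)) ⊗ₜ[ℂ] Y.act x (D.S (D.S l₂)) := by
  simp only [ZM, LinearMap.comp_apply, phi4_tmul, map_tmul, LinearMap.flip_apply,
    mk_apply, LinearMap.comp_apply, Cbig_tmul, D.Sinv_S]

def Lm (x : N) : H ⊗[ℂ] H →ₗ[ℂ] H ⊗[ℂ] N :=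
  Cbig Y ∘ₗ map (map (D.S ∘ₗ D.S) (map (D.S ∘ₗ D.S) (D.S ∘ₗ D.S)) ∘ₗ T3 D)
    ((TensorProduct.mk ℂ H N).flip x)

lemma Lc (x : N) (a : H) :
    Lm Y x (D.comul a) = ZM Y x ((map LinearMap.id (map LinearMap.id D.comul)) (T3 D a)) := by
  have e1 : Lm Y x = Cbig Y ∘ₗ map (map (D.S ∘ₗ D.S) (map (D.S ∘ₗ D.S) (D.S ∘ₗ D.S)))
      ((TensorProduct.mk ℂ H N).flip x) ∘ₗ map (T3 D) LinearMap.id := by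
    rw [Lm, show ((TensorProduct.mk ℂ H N).flip x)
        = ((TensorProduct.mk ℂ H N).flip x) ∘ₗ LinearMap.id from (LinearMap.comp_id _).symm,
      TensorProduct.map_comp]
    rfl
  rw [e1]
  simp only [LinearMap.comp_apply]
  rw [coassoc4 D a]
  rfl

lemma z3 (x : N) (l₁ l₂ : H) (w : H ⊗[ℂ] H) :
    ZM Y x (l₁ ⊗ₜ[ℂ] (l₂ ⊗ₜ[ℂ] w))
      = (KL D w * D.S (D.S l₁)) ⊗ₜ[ℂ] Y.act x (D.S (D.S l₂)) := by
  induction w using TensorProduct.induction_on with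
  | zero => simp
  | tmul c₁ c₂ => simp only [ZM_tmul, KL_tmul]
  | add w₁ w₂ hw₁ hw₂ =>
      simp only [tmul_add, map_add, hw₁, hw₂, add_mul, add_tmul]

lemma z4 (x : N) (v : H ⊗[ℂ] (H ⊗[ℂ] H)) :
    ZM Y x ((map LinearMap.id (map LinearMap.id D.comul)) v)
      = Rx Y x ((map LinearMap.id (er D)) v) := by
  induction v using TensorProduct.induction_on with
  | zero => simp
  | tmul l₁ u =>
      induction u using TensorProduct.induction_on with
      | zero => simp
      | tmul l₂ l₃ =>
          simp only [map_tmul, LinearMap.id_apply, er_tmul]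
          rw [z3, KL_comul]
          simp only [map_smul, tmul_smul, Rx_tmul]
          rw [← Algebra.smul_def, smul_tmul']
      | add u₁ u₂ hu₁ hu₂ => simp only [tmul_add, map_add, hu₁, hu₂]
  | add v₁ v₂ hv₁ hv₂ => simp only [map_add, hv₁, hv₂]

lemma big2 (x : N) (a : H) : Lm Y x (D.comul a) = Rx Y x (D.comul a) := by
  rw [Lc, z4]
  congr 1
  have e1 : (map LinearMap.id (er D)) (T3 D a)
      = (map LinearMap.id (er D ∘ₗ D.comul)) (D.comul a) := by
    rw [map_id_comp]
    rfl
  rw [e1, show er D ∘ₗ D.comul = LinearMap.id from LinearMap.ext (er_comul D),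
    TensorProduct.map_id, LinearMap.id_apply]

lemma h7 (x : N) (u : H ⊗[ℂ] H) :
    (map (D.S ∘ₗ D.S) (Gh Y)) ((TensorProduct.assoc ℂ H H N) (u ⊗ₜ[ℂ] x)) = Rx Y x u := by
  induction u using TensorProduct.induction_on with
  | zero => simp
  | tmul a₁ a₂ => simp only [assoc_tmul, map_tmul, Gh_tmul, Rx_tmul, LinearMap.comp_apply]
  | add u₁ u₂ hu₁ hu₂ => simp only [add_tmul, map_add, hu₁, hu₂]

lemma f2a (n : N) : Phi2 Y n = Bn Y n ∘ₗ Dp Y := by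
  apply TensorProduct.ext'
  intro a x
  simp only [Phi2_tmul, LinearMap.comp_apply, Dp, map_tmul, LinearMap.id_apply,
    LinearEquiv.coe_coe]
  rw [act_alg' Y n x (D.S (D.S a)), comul_S2 D a, h7]
  have : ∀ u : H ⊗[ℂ] H,
      LinearMap.mul' ℂ N ((map (Y.act n) (Y.act x)) ((map (D.S ∘ₗ D.S) (D.S ∘ₗ D.S)) u))
        = Bn Y n (Rx Y x u) := by
    intro u
    induction u using TensorProduct.induction_on with
    | zero => simp
    | tmul a₁ a₂ =>
        simp only [map_tmul, LinearMap.comp_apply, LinearMap.mul'_apply, Rx_tmul, Bn_tmul]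
    | add u₁ u₂ hu₁ hu₂ => simp only [map_add, hu₁, hu₂]
  exact this (D.comul a)

lemma cmGh : Y.coact ∘ₗ Gh Y = CY Y ∘ₗ map LinearMap.id Y.coact := by
  apply TensorProduct.ext'
  intro a x
  simp only [LinearMap.comp_apply, Gh_tmul, map_tmul, LinearMap.id_apply, CY]
  rw [yd' Y x (D.S (D.S a))]

lemma CYassoc (x : N) (u : H ⊗[ℂ] H) :
    CY Y ((TensorProduct.assoc ℂ H H N) (u ⊗ₜ[ℂ] x)) = Lm Y x u := by
  induction u using TensorProduct.induction_on with
  | zero => simp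
  | tmul a₁ a₂ =>
      simp only [assoc_tmul, CY, Lm, LinearMap.comp_apply, map_tmul, LinearMap.id_apply,
        LinearMap.flip_apply, mk_apply]
      rw [T3_S2]
  | add u₁ u₂ hu₁ hu₂ => simp only [add_tmul, map_add, hu₁, hu₂]

lemma coact_gammaHat (m : N) : Y.coact (Y.gammaHat m) = Dp Y (Y.coact m) := by
  rw [gammaHat_eq]
  have e1 := LinearMap.congr_fun (cmGh Y) (Y.coact m)
  simp only [LinearMap.comp_apply] at e1
  rw [e1, ← Y.coact_coassoc m]
  have e2 : CY Y ∘ₗ (TensorProduct.assoc ℂ H H N).toLinearMap ∘ₗ map D.comul LinearMap.id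
      = Dp Y := by
    apply TensorProduct.ext'
    intro a x
    simp only [LinearMap.comp_apply, map_tmul, LinearMap.id_apply, LinearEquiv.coe_coe, Dp]
    rw [CYassoc, big2, h7]
  exact LinearMap.congr_fun e2 (Y.coact m) |>.trans rfl |>.symm ▸ rfl

lemma identity2 (m n : N) :
    ((Y.θ m).map fun p => Y.act (n * p.2) (D.S (D.S p.1))).sum = Y.gammaHat m * n := by
  have l0 : ((Y.θ m).map fun p => Y.act (n * p.2) (D.S (D.S p.1))).sum
      = Phi2 Y n (Y.coact m) := by
    rw [← Y.θ_spec, ← lsum (Phi2 Y n) (Y.θ m) (fun p => p.1 ⊗ₜ[ℂ] p.2)]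
    simp
  rw [l0, LinearMap.congr_fun (f2a Y n) (Y.coact m), LinearMap.comp_apply,
    ← coact_gammaHat, ← bc']

end Aux


/-- `(m₍₀₎ n) ◁ S⁻¹(m₍₋₁₎) = n γ(m)` and
`(n m₍₀₎) ◁ S²(m₍₋₁₎) = γ̂(m) n`. -/
theorem stmt2 {H N : Type*} [Ring H] [Algebra ℂ H] [StarRing H]
    [Ring N] [Algebra ℂ N] [StarRing N]
    (D : HopfData H) (Y : YDData H N D) :
    ∀ m n : N,
      ((Y.θ m).map fun p => Y.act (p.2 * n) (D.Sinv p.1)).sum = n * Y.gamma m ∧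
      ((Y.θ m).map fun p => Y.act (n * p.2) (D.S (D.S p.1))).sum = Y.gammaHat m * n := by
  intro m n
  exact ⟨Aux.identity1 Y m n, Aux.identity2 Y m n⟩
end
end

section
/- With H, N, γ as above, one has γ(m ◁ h) = γ(m) ◁ S⁻²(h) and γ̂(m ◁ h) = γ̂(m) ◁ S²(h) for all m ∈ N and h ∈ H. -/
open scoped TensorProduct

noncomputable section

section Auxiliary

theorem sum_map_add' {α M : Type*} [AddCommMonoid M] (l : List α) (f g : α → M) :
    (l.map fun a => f a + g a).sum = (l.map f).sum + (l.map g).sum := by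
  induction l with
  | nil => simp
  | cons a l ih => simp [ih]; abel

theorem sum_map_flatMap' {α β M : Type*} [AddCommMonoid M] (l : List α) (f : α → List β)
    (g : β → M) :
    ((l.flatMap f).map g).sum = (l.map fun a => ((f a).map g).sum).sum := by
  induction l with
  | nil => simp
  | cons a l ih => simp [List.flatMap_cons, ih]

theorem list_sum_comm' {α β M : Type*} [AddCommMonoid M] (l1 : List α) (l2 : List β)
    (f : α → β → M) :
    (l1.map fun a => (l2.map fun b => f a b).sum).sum
      = (l2.map fun b => (l1.map fun a => f a b).sum).sum := by
  induction l1 with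
  | nil => simp
  | cons a l ih => simp [ih, sum_map_add']

variable {H N : Type*} [Ring H] [Algebra ℂ H] [Ring N] [Algebra ℂ N]

theorem HopfData.Sinv_antimul_s3 (D : HopfData H) (a b : H) :
    D.Sinv (a * b) = D.Sinv b * D.Sinv a := by
  have h1 : D.S (D.Sinv b * D.Sinv a) = a * b := by
    rw [D.S_antimul, D.S_Sinv, D.S_Sinv]
  rw [← h1, D.Sinv_S]

theorem HopfData.Sinv_one_s3 (D : HopfData H) : D.Sinv 1 = 1 := by
  have := D.Sinv_S 1
  rwa [D.S_one] at this

theorem HopfData.Sinv_algebraMap (D : HopfData H) (c : ℂ) :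
    D.Sinv (algebraMap ℂ H c) = algebraMap ℂ H c := by
  rw [Algebra.algebraMap_eq_smul_one, map_smul, D.Sinv_one_s3]

/-- `Σ h₂ S⁻¹(h₁) = ε(h) 1`. -/
theorem HopfData.antipode_Sinv (D : HopfData H) (x : H) :
    ((D.Δ x).map fun q => q.2 * D.Sinv q.1).sum = algebraMap ℂ H (D.ε x) := by
  have h1 := congrArg D.Sinv (D.antipode_right x)
  rw [map_list_sum, List.map_map, D.Sinv_algebraMap] at h1
  rw [← h1]
  congr 1
  apply List.map_congr_left
  intro q _
  simp only [Function.comp_apply]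
  rw [D.Sinv_antimul_s3, D.Sinv_S]

end Auxiliary

section Aux2

theorem sum_flatMap' {α M : Type*} [AddCommMonoid M] (l : List α) (f : α → List M) :
    (l.flatMap f).sum = (l.map fun a => (f a).sum).sum := by
  induction l with
  | nil => simp
  | cons a l ih => simp [List.flatMap_cons, ih]

theorem list_sum_tmul {R M P : Type*} [CommSemiring R] [AddCommMonoid M] [AddCommMonoid P]
    [Module R M] [Module R P] {α : Type*} (l : List α) (f : α → M) (y : P) :
    ((l.map f).sum ⊗ₜ[R] y) = (l.map fun a => f a ⊗ₜ[R] y).sum := by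
  induction l with
  | nil => simp
  | cons a l ih => simp [TensorProduct.add_tmul, ih]

theorem tmul_list_sum {R M P : Type*} [CommSemiring R] [AddCommMonoid M] [AddCommMonoid P]
    [Module R M] [Module R P] {α : Type*} (l : List α) (f : α → P) (x : M) :
    (x ⊗ₜ[R] (l.map f).sum) = (l.map fun a => x ⊗ₜ[R] f a).sum := by
  induction l with
  | nil => simp
  | cons a l ih => simp [TensorProduct.tmul_add, ih]

variable {H N : Type*} [Ring H] [Algebra ℂ H] [Ring N] [Algebra ℂ N]

/-- The linear map `h ⊗ n ↦ n ◁ k(h)`. -/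
def YDData.Lmap {D : HopfData H} (Y : YDData H N D) (k : H →ₗ[ℂ] H) :
    H ⊗[ℂ] N →ₗ[ℂ] N :=
  TensorProduct.lift (LinearMap.mk₂ ℂ (fun h n => Y.act n (k h))
    (fun h h' n => by simp)
    (fun c h n => by simp)
    (fun h n n' => by simp)
    (fun c h n => by simp))

@[simp] theorem YDData.Lmap_tmul {D : HopfData H} (Y : YDData H N D) (k : H →ₗ[ℂ] H)
    (h : H) (n : N) : Y.Lmap k (h ⊗ₜ[ℂ] n) = Y.act n (k h) := by
  simp [YDData.Lmap]

theorem YDData.gamma_eq_s3 {D : HopfData H} (Y : YDData H N D) (m : N) :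
    Y.gamma m = Y.Lmap D.Sinv (Y.coact m) := by
  rw [← Y.θ_spec, map_list_sum, List.map_map]
  unfold YDData.gamma
  congr 1

theorem YDData.gammaHat_eq_s3 {D : HopfData H} (Y : YDData H N D) (m : N) :
    Y.gammaHat m = Y.Lmap (D.S.comp D.S) (Y.coact m) := by
  rw [← Y.θ_spec, map_list_sum, List.map_map]
  unfold YDData.gammaHat
  congr 1

/-- Coassociativity on the chosen Sweedler representatives, as a tensor identity. -/
theorem HopfData.Δ3_tensor_s3 (D : HopfData H) (h : H) :
    ((D.Δ3 h).map fun t => t.1 ⊗ₜ[ℂ] (t.2.1 ⊗ₜ[ℂ] t.2.2)).sum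
      = (((D.Δ h).flatMap fun r => (D.Δ r.2).map fun q =>
            r.1 ⊗ₜ[ℂ] (q.1 ⊗ₜ[ℂ] q.2))).sum := by
  have key := D.coassoc h
  have lhs : (TensorProduct.assoc ℂ H H H)
      ((TensorProduct.map D.comul LinearMap.id) (D.comul h))
      = ((D.Δ3 h).map fun t => t.1 ⊗ₜ[ℂ] (t.2.1 ⊗ₜ[ℂ] t.2.2)).sum := by
    have e1 : (TensorProduct.map D.comul LinearMap.id) (D.comul h)
        = ((D.Δ h).map fun r => (D.comul r.1) ⊗ₜ[ℂ] r.2).sum := by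
      rw [← D.Δ_spec h, map_list_sum, List.map_map]
      rfl
    rw [e1, ← LinearEquiv.coe_toLinearMap, map_list_sum, List.map_map]
    unfold HopfData.Δ3
    rw [sum_map_flatMap']
    congr 1
    apply List.map_congr_left
    intro r _
    simp only [Function.comp_apply]
    rw [← D.Δ_spec r.1, list_sum_tmul, map_list_sum, List.map_map, List.map_map]
    congr 1
  have rhs : (TensorProduct.map LinearMap.id D.comul) (D.comul h)
      = (((D.Δ h).flatMap fun r => (D.Δ r.2).map fun q =>
            r.1 ⊗ₜ[ℂ] (q.1 ⊗ₜ[ℂ] q.2))).sum := by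
    rw [← D.Δ_spec h, map_list_sum, List.map_map, sum_flatMap']
    congr 1
    apply List.map_congr_left
    intro r _
    simp only [Function.comp_apply, TensorProduct.map_tmul, LinearMap.id_coe, id_eq]
    rw [← D.Δ_spec r.2, tmul_list_sum]
  rw [← lhs, ← rhs, key]

end Aux2

section Main

variable {H N : Type*} [Ring H] [Algebra ℂ H] [Ring N] [Algebra ℂ N]

theorem YDData.gamma_act_s3 {D : HopfData H} (Y : YDData H N D) (m : N) (h : H) :
    Y.gamma (Y.act m h) = Y.act (Y.gamma m) (D.Sinv (D.Sinv h)) := by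
  have key : ∀ p : H × N,
      ((D.Δ3 h).map fun t =>
          Y.act p.2 (t.2.1 * (D.Sinv t.1 * (D.Sinv p.1 * D.Sinv (D.Sinv t.2.2))))).sum
        = Y.act (Y.act p.2 (D.Sinv p.1)) (D.Sinv (D.Sinv h)) := by
    intro p
    unfold HopfData.Δ3
    rw [sum_map_flatMap']
    have inner : ∀ r : H × H,
        ((((D.Δ r.1).map fun q => (q.1, q.2, r.2)).map fun t =>
            Y.act p.2 (t.2.1 * (D.Sinv t.1 * (D.Sinv p.1 * D.Sinv (D.Sinv t.2.2))))).sum)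
          = D.ε r.1 • Y.act p.2 (D.Sinv p.1 * D.Sinv (D.Sinv r.2)) := by
      intro r
      rw [List.map_map]
      have e1 : ((D.Δ r.1).map ((fun t : H × H × H =>
            Y.act p.2 (t.2.1 * (D.Sinv t.1 * (D.Sinv p.1 * D.Sinv (D.Sinv t.2.2))))) ∘
              fun q => (q.1, q.2, r.2)))
          = (D.Δ r.1).map (⇑((Y.act p.2).comp
              (LinearMap.mulRight ℂ (D.Sinv p.1 * D.Sinv (D.Sinv r.2)))) ∘
                fun q => q.2 * D.Sinv q.1) := by
        apply List.map_congr_left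
        intro q _
        simp [mul_assoc]
      rw [e1, ← List.map_map, ← map_list_sum, D.antipode_Sinv]
      simp only [LinearMap.coe_comp, Function.comp_apply, LinearMap.mulRight_apply]
      rw [← Algebra.smul_def, map_smul]
    rw [List.map_congr_left fun r _ => inner r]
    have e2 : ((D.Δ h).map fun r => D.ε r.1 • Y.act p.2 (D.Sinv p.1 * D.Sinv (D.Sinv r.2)))
        = (D.Δ h).map (⇑((Y.act p.2).comp ((LinearMap.mulLeft ℂ (D.Sinv p.1)).comp
            (D.Sinv.comp D.Sinv))) ∘ fun r => D.ε r.1 • r.2) := by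
      apply List.map_congr_left
      intro r _
      simp
    rw [e2, ← List.map_map, ← map_list_sum, D.counit_left]
    simp only [LinearMap.coe_comp, Function.comp_apply, LinearMap.mulLeft_apply]
    rw [← Y.act_mulH]
  rw [Y.gamma_eq_s3, Y.yd m h, map_list_sum, sum_map_flatMap']
  have e : ∀ t : H × H × H,
      (((Y.θ m).map fun p => (D.Sinv t.2.2 * p.1 * t.1) ⊗ₜ[ℂ] Y.act p.2 t.2.1).map
          ⇑(Y.Lmap D.Sinv))
        = (Y.θ m).map fun p =>
            Y.act p.2 (t.2.1 * (D.Sinv t.1 * (D.Sinv p.1 * D.Sinv (D.Sinv t.2.2)))) := by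
    intro t
    rw [List.map_map]
    apply List.map_congr_left
    intro q _
    simp only [Function.comp_apply, YDData.Lmap_tmul]
    rw [D.Sinv_antimul_s3, D.Sinv_antimul_s3, ← Y.act_mulH]
  rw [show ((D.Δ3 h).map fun t => (((Y.θ m).map fun p =>
        (D.Sinv t.2.2 * p.1 * t.1) ⊗ₜ[ℂ] Y.act p.2 t.2.1).map ⇑(Y.Lmap D.Sinv)).sum)
      = (D.Δ3 h).map (fun t => ((Y.θ m).map fun p =>
          Y.act p.2 (t.2.1 * (D.Sinv t.1 * (D.Sinv p.1 * D.Sinv (D.Sinv t.2.2))))).sum)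
    from List.map_congr_left fun t _ => by rw [e t]]
  rw [list_sum_comm' (D.Δ3 h) (Y.θ m) (fun t p =>
    Y.act p.2 (t.2.1 * (D.Sinv t.1 * (D.Sinv p.1 * D.Sinv (D.Sinv t.2.2)))))]
  rw [List.map_congr_left fun p _ => key p]
  unfold YDData.gamma
  rw [show (fun p : H × N => Y.act (Y.act p.2 (D.Sinv p.1)) (D.Sinv (D.Sinv h)))
      = (⇑(Y.act.flip (D.Sinv (D.Sinv h))) ∘ fun p => Y.act p.2 (D.Sinv p.1)) from rfl,
    ← List.map_map, ← map_list_sum]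
  rfl

end Main

section Main2

variable {H N : Type*} [Ring H] [Algebra ℂ H] [Ring N] [Algebra ℂ N]

/-- Auxiliary trilinear map `a ⊗ (b ⊗ c) ↦ act2 (b * S c * (K * S (S a)))`. -/
def PhiAux (act2 : H →ₗ[ℂ] N) (S : H →ₗ[ℂ] H) (K : H) :
    H ⊗[ℂ] (H ⊗[ℂ] H) →ₗ[ℂ] N :=
  (act2.comp ((LinearMap.mul' ℂ H).comp
    ((TensorProduct.map ((LinearMap.mul' ℂ H).comp (TensorProduct.map LinearMap.id S))
        ((LinearMap.mulLeft ℂ K).comp (S.comp S))).comp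
      (TensorProduct.comm ℂ H (H ⊗[ℂ] H)).toLinearMap)))

@[simp] theorem PhiAux_tmul (act2 : H →ₗ[ℂ] N) (S : H →ₗ[ℂ] H) (K : H) (a b c : H) :
    PhiAux act2 S K (a ⊗ₜ[ℂ] (b ⊗ₜ[ℂ] c)) = act2 (b * S c * (K * S (S a))) := by
  simp [PhiAux]

theorem YDData.gammaHat_act_s3 {D : HopfData H} (Y : YDData H N D) (m : N) (h : H) :
    Y.gammaHat (Y.act m h) = Y.act (Y.gammaHat m) (D.S (D.S h)) := by
  have key : ∀ p : H × N,
      ((D.Δ3 h).map fun t =>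
          Y.act p.2 (t.2.1 * D.S t.2.2 * (D.S (D.S p.1) * D.S (D.S t.1)))).sum
        = Y.act (Y.act p.2 (D.S (D.S p.1))) (D.S (D.S h)) := by
    intro p
    have t1 := congrArg (PhiAux (Y.act p.2) D.S (D.S (D.S p.1))) (D.Δ3_tensor_s3 h)
    rw [map_list_sum, map_list_sum, List.map_map, sum_map_flatMap'] at t1
    have el : (D.Δ3 h).map (⇑(PhiAux (Y.act p.2) D.S (D.S (D.S p.1))) ∘
          fun t => t.1 ⊗ₜ[ℂ] (t.2.1 ⊗ₜ[ℂ] t.2.2))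
        = (D.Δ3 h).map fun t =>
            Y.act p.2 (t.2.1 * D.S t.2.2 * (D.S (D.S p.1) * D.S (D.S t.1))) := by
      apply List.map_congr_left
      intro t _
      simp
    rw [el] at t1
    rw [t1]
    have inner : ∀ r : H × H,
        ((((D.Δ r.2).map fun q => r.1 ⊗ₜ[ℂ] (q.1 ⊗ₜ[ℂ] q.2)).map
            ⇑(PhiAux (Y.act p.2) D.S (D.S (D.S p.1)))).sum)
          = D.ε r.2 • Y.act p.2 (D.S (D.S p.1) * D.S (D.S r.1)) := by
      intro r
      rw [List.map_map]
      have e1 : (List.map (⇑(PhiAux (Y.act p.2) D.S (D.S (D.S p.1))) ∘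
            fun q => r.1 ⊗ₜ[ℂ] (q.1 ⊗ₜ[ℂ] q.2)) (D.Δ r.2))
          = (D.Δ r.2).map (⇑((Y.act p.2).comp
              (LinearMap.mulRight ℂ (D.S (D.S p.1) * D.S (D.S r.1)))) ∘
                fun q => q.1 * D.S q.2) := by
        apply List.map_congr_left
        intro q _
        simp [mul_assoc]
      rw [e1, ← List.map_map, ← map_list_sum, D.antipode_right]
      simp only [LinearMap.coe_comp, Function.comp_apply, LinearMap.mulRight_apply]
      rw [← Algebra.smul_def, map_smul]
    rw [show (List.map (fun r => (((D.Δ r.2).map fun q => r.1 ⊗ₜ[ℂ] (q.1 ⊗ₜ[ℂ] q.2)).map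
          ⇑(PhiAux (Y.act p.2) D.S (D.S (D.S p.1)))).sum) (D.Δ h))
        = (D.Δ h).map fun r => D.ε r.2 • Y.act p.2 (D.S (D.S p.1) * D.S (D.S r.1))
      from List.map_congr_left fun r _ => inner r]
    have e2 : ((D.Δ h).map fun r => D.ε r.2 • Y.act p.2 (D.S (D.S p.1) * D.S (D.S r.1)))
        = (D.Δ h).map (⇑((Y.act p.2).comp ((LinearMap.mulLeft ℂ (D.S (D.S p.1))).comp
            (D.S.comp D.S))) ∘ fun r => D.ε r.2 • r.1) := by
      apply List.map_congr_left
      intro r _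
      simp
    rw [e2, ← List.map_map, ← map_list_sum, D.counit_right]
    simp only [LinearMap.coe_comp, Function.comp_apply, LinearMap.mulLeft_apply]
    rw [← Y.act_mulH]
  rw [Y.gammaHat_eq_s3, Y.yd m h, map_list_sum, sum_map_flatMap']
  have e : ∀ t : H × H × H,
      (((Y.θ m).map fun p => (D.Sinv t.2.2 * p.1 * t.1) ⊗ₜ[ℂ] Y.act p.2 t.2.1).map
          ⇑(Y.Lmap (D.S.comp D.S)))
        = (Y.θ m).map fun p =>
            Y.act p.2 (t.2.1 * D.S t.2.2 * (D.S (D.S p.1) * D.S (D.S t.1))) := by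
    intro t
    rw [List.map_map]
    apply List.map_congr_left
    intro q _
    simp only [Function.comp_apply, YDData.Lmap_tmul, LinearMap.coe_comp]
    have h1 : D.S (D.Sinv t.2.2 * q.1 * t.1) = D.S t.1 * (D.S q.1 * t.2.2) := by
      rw [D.S_antimul, D.S_antimul, D.S_Sinv]
    have h2 : D.S (D.S t.1 * (D.S q.1 * t.2.2))
        = D.S t.2.2 * D.S (D.S q.1) * D.S (D.S t.1) := by
      rw [D.S_antimul, D.S_antimul]
    rw [h1, h2, ← Y.act_mulH]
    simp [mul_assoc]
  rw [show ((D.Δ3 h).map fun t => (((Y.θ m).map fun p =>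
        (D.Sinv t.2.2 * p.1 * t.1) ⊗ₜ[ℂ] Y.act p.2 t.2.1).map ⇑(Y.Lmap (D.S.comp D.S))).sum)
      = (D.Δ3 h).map (fun t => ((Y.θ m).map fun p =>
          Y.act p.2 (t.2.1 * D.S t.2.2 * (D.S (D.S p.1) * D.S (D.S t.1)))).sum)
    from List.map_congr_left fun t _ => by rw [e t]]
  rw [list_sum_comm' (D.Δ3 h) (Y.θ m) (fun t p =>
    Y.act p.2 (t.2.1 * D.S t.2.2 * (D.S (D.S p.1) * D.S (D.S t.1))))]
  rw [List.map_congr_left fun p _ => key p]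
  unfold YDData.gammaHat
  rw [show (fun p : H × N => Y.act (Y.act p.2 (D.S (D.S p.1))) (D.S (D.S h)))
      = (⇑(Y.act.flip (D.S (D.S h))) ∘ fun p => Y.act p.2 (D.S (D.S p.1))) from rfl,
    ← List.map_map, ← map_list_sum]
  rfl

end Main2

/-- `γ(m ◁ h) = γ(m) ◁ S⁻²(h)` and `γ̂(m ◁ h) = γ̂(m) ◁ S²(h)`. -/
theorem stmt3 {H N : Type*} [Ring H] [Algebra ℂ H] [StarRing H]
    [Ring N] [Algebra ℂ N] [StarRing N]
    (D : HopfData H) (Y : YDData H N D) :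
    ∀ (m : N) (h : H),
      Y.gamma (Y.act m h) = Y.act (Y.gamma m) (D.Sinv (D.Sinv h)) ∧
      Y.gammaHat (Y.act m h) = Y.act (Y.gammaHat m) (D.S (D.S h)) := by
  intro m h
  exact ⟨Y.gamma_act_s3 m h, Y.gammaHat_act_s3 m h⟩
end
end
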